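/- arXiv:1812.11583 — 11 statements merged into one kernel-verified Lean document; each statement's English description precedes it below -/
import Mathlib

section
/- Let K be a closed convex set in R^d and X ∈ K. Then the smallest face of K containing X equals K ∩ (X + pert_K(X)), where pert_K(X) is the set of directions A such that X ± tA ∈ K for all sufficiently small t > 0. -/
/-- A face of a convex set `K`: a convex subset `F ⊆ K` such that whenever a proper
convex combination of two points of `K` lies in `F`, both points lie in `F`. -/
def IsFace {d : ℕ} (K F : Set (EuclideanSpace ℝ (Fin d))) : Prop :=
  F ⊆ K ∧ Convex ℝ F ∧ ∀ x ∈ K, ∀ y ∈ K, ∀ θ : ℝ, 0 < θ → θ < 1 →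
    θ • x + (1 - θ) • y ∈ F → x ∈ F ∧ y ∈ F

/-- The perturbation of `X` in `K`: directions `A` with `X ± t • A ∈ K`
for all sufficiently small `t > 0`. -/
def pert {d : ℕ} (K : Set (EuclideanSpace ℝ (Fin d))) (X : EuclideanSpace ℝ (Fin d)) :
    Set (EuclideanSpace ℝ (Fin d)) :=
  {A | ∃ ε > (0 : ℝ), ∀ t : ℝ, 0 < t → t < ε → X + t • A ∈ K ∧ X - t • A ∈ K}

lemma convex3 {d : ℕ} {K : Set (EuclideanSpace ℝ (Fin d))} (hK : Convex ℝ K)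
    {p q r : EuclideanSpace ℝ (Fin d)} (hp : p ∈ K) (hq : q ∈ K) (hr : r ∈ K)
    {a b c : ℝ} (ha : 0 < a) (hb : 0 ≤ b) (hc : 0 ≤ c) (habc : a + b + c = 1) :
    a • p + b • q + c • r ∈ K := by
  have hab : 0 < a + b := by linarith
  have h1 : a / (a + b) + b / (a + b) = 1 := by field_simp
  have hq' := hK hp hq (by positivity) (by positivity) h1
  have h2 := hK hq' hr hab.le hc habc
  have e : (a + b) • ((a / (a + b)) • p + (b / (a + b)) • q) + c • r
      = a • p + b • q + c • r := by
    match_scalars <;> field_simp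
  rwa [e] at h2

lemma pert_face_aux {d : ℕ} (K : Set (EuclideanSpace ℝ (Fin d))) (hconv : Convex ℝ K)
    {X x y : EuclideanSpace ℝ (Fin d)} (hX : X ∈ K) (hx : x ∈ K) (hy : y ∈ K)
    {θ : ℝ} (hθ0 : 0 < θ) (hθ1 : θ < 1)
    (hz : θ • x + (1 - θ) • y - X ∈ pert K X) : x - X ∈ pert K X := by
  obtain ⟨ε, hε, hmem⟩ := hz
  have ht₀ : (0:ℝ) < ε / 2 := half_pos hε
  obtain ⟨hp, hm⟩ := hmem (ε / 2) ht₀ (half_lt_self hε)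
  have h1θ : 0 < 1 - θ := by linarith
  set M : ℝ := 1 / (θ * (ε / 2)) + (1 - θ) / θ with hM
  have hMpos : 0 < M := by positivity
  refine ⟨min 1 (1 / M), by positivity, fun s hs hs' => ?_⟩
  have hs1 : s < 1 := lt_of_lt_of_le hs' (min_le_left _ _)
  have hsM : s * M < 1 := by
    have h := lt_of_lt_of_le hs' (min_le_right _ _)
    have := mul_lt_mul_of_pos_right h hMpos
    rwa [one_div, inv_mul_cancel₀ hMpos.ne'] at this
  constructor
  · have h := hconv hX hx (by linarith : (0:ℝ) ≤ 1 - s) hs.le (by ring)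
    have e : (1 - s) • X + s • x = X + s • (x - X) := by module
    rwa [e] at h
  · set a : ℝ := s / (θ * (ε / 2)) with haa
    set b : ℝ := s * (1 - θ) / θ with hbb
    have ha : 0 < a := by positivity
    have hb : 0 < b := by positivity
    have hab : a + b = s * M := by
      rw [haa, hbb, hM]
      field_simp
    have hc : 0 ≤ 1 - a - b := by
      rw [show (1:ℝ) - a - b = 1 - (a + b) by ring, hab]; linarith
    have key : X - s • (x - X)
        = a • (X - (ε / 2) • (θ • x + (1 - θ) • y - X)) + b • y + (1 - a - b) • X := by
      rw [haa, hbb]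
      match_scalars <;> field_simp <;> ring
    rw [key]
    exact convex3 hconv hm hy hX ha hb.le hc (by ring)

/-- The smallest face of `K` containing `X` equals `K ∩ (X + pert_K(X))`. -/
theorem smallestFace_eq_inter_pert {d : ℕ} (K : Set (EuclideanSpace ℝ (Fin d)))
    (hK : IsClosed K) (hconv : Convex ℝ K)
    (X : EuclideanSpace ℝ (Fin d)) (hX : X ∈ K) :
    ⋂₀ {F | IsFace K F ∧ X ∈ F} = K ∩ {Y | Y - X ∈ pert K X} := by
  set S := K ∩ {Y | Y - X ∈ pert K X} with hS
  have hXS : X ∈ S := by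
    refine ⟨hX, ⟨1, one_pos, fun t ht ht' => ?_⟩⟩
    simp [sub_self, hX]
  have hface : IsFace K S := by
    refine ⟨Set.inter_subset_left, ?_, ?_⟩
    · -- convexity of S
      intro Y1 hY1 Y2 hY2 a b ha hb hab
      obtain rfl : b = 1 - a := by linarith
      refine ⟨hconv hY1.1 hY2.1 ha hb hab, ?_⟩
      obtain ⟨ε1, hε1, h1⟩ := hY1.2
      obtain ⟨ε2, hε2, h2⟩ := hY2.2
      refine ⟨min ε1 ε2, lt_min hε1 hε2, fun t ht htε => ?_⟩
      obtain ⟨h1p, h1m⟩ := h1 t ht (htε.trans_le (min_le_left _ _))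
      obtain ⟨h2p, h2m⟩ := h2 t ht (htε.trans_le (min_le_right _ _))
      constructor
      · have h := hconv h1p h2p ha hb (by ring)
        have e : a • (X + t • (Y1 - X)) + (1 - a) • (X + t • (Y2 - X))
            = X + t • (a • Y1 + (1 - a) • Y2 - X) := by module
        rwa [e] at h
      · have h := hconv h1m h2m ha hb (by ring)
        have e : a • (X - t • (Y1 - X)) + (1 - a) • (X - t • (Y2 - X))
            = X - t • (a • Y1 + (1 - a) • Y2 - X) := by module
        rwa [e] at h
    · -- face property
      intro x hx y hy θ h0 h1 hmem
      have h1' := pert_face_aux K hconv hX hx hy h0 h1 hmem.2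
      have h2' : y - X ∈ pert K X := by
        apply pert_face_aux K hconv hX hy hx (by linarith : (0:ℝ) < 1 - θ) (by linarith)
        have e : (1 - θ) • y + (1 - (1 - θ)) • x - X = θ • x + (1 - θ) • y - X := by module
        rw [e]; exact hmem.2
      exact ⟨⟨hx, h1'⟩, ⟨hy, h2'⟩⟩
  apply Set.Subset.antisymm
  · exact Set.sInter_subset_of_mem ⟨hface, hXS⟩
  · intro Y hY
    refine Set.mem_sInter.mpr fun F hF => ?_
    obtain ⟨⟨hFK, hFconv, hFprop⟩, hXF⟩ := hF
    obtain ⟨hYK, ⟨ε, hε, h⟩⟩ := hY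
    set t := min (ε / 2) (1 / 2 : ℝ) with ht
    have ht0 : 0 < t := lt_min (half_pos hε) (by norm_num)
    have htε : t < ε := (min_le_left _ _).trans_lt (half_lt_self hε)
    have ht1 : t < 1 := lt_of_le_of_lt (min_le_right _ _) (by norm_num)
    obtain ⟨hp, hm⟩ := h t ht0 htε
    have hX' : (1/2 : ℝ) • (X + t • (Y - X)) + (1 - 1/2 : ℝ) • (X - t • (Y - X)) ∈ F := by
      have e : (1/2 : ℝ) • (X + t • (Y - X)) + (1 - 1/2 : ℝ) • (X - t • (Y - X)) = X := by
        module
      rw [e]; exact hXF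
    obtain ⟨hpF, _⟩ := hFprop _ hp _ hm (1/2) (by norm_num) (by norm_num) hX'
    have e2 : t • Y + (1 - t) • X = X + t • (Y - X) := by module
    exact (hFprop Y hYK X hX t ht0 ht1 (by rw [e2]; exact hpF)).1
end

section
/- Welch bound: If v_1, ..., v_N are unit vectors in R^r with N > r (more generally N ≥ 1), then max_{i ≠ j} |⟨v_i, v_j⟩| ≥ sqrt((N − r)/(r(N − 1))). -/
/-- Welch bound: for `N ≥ 2` unit vectors in `ℝ^r`, some pair `i ≠ j` has
`|⟨v_i, v_j⟩| ≥ sqrt((N - r) / (r (N - 1)))`. -/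
theorem welch_bound (N r : ℕ) (hr : 0 < r) (hN : 2 ≤ N)
    (v : Fin N → EuclideanSpace ℝ (Fin r)) (hv : ∀ i, ‖v i‖ = 1) :
    ∃ i j : Fin N, i ≠ j ∧
      Real.sqrt (((N : ℝ) - r) / (r * ((N : ℝ) - 1))) ≤ |(inner ℝ (v i) (v j) : ℝ)| := by
  classical
  set K : Fin N → Fin N → ℝ := fun i j => (inner ℝ (v i) (v j) : ℝ) with hKdef
  have hK : ∀ i j, K i j = ∑ a, v i a * v j a := by
    intro i j
    simp [hKdef, PiLp.inner_apply, RCLike.inner_apply, mul_comm]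
  set M : Fin r → Fin r → ℝ := fun a b => ∑ i, v i a * v i b with hM
  -- total sum of squared inner products equals Frobenius norm² of M
  have h1 : ∑ i, ∑ j, (K i j) ^ 2 = ∑ a, ∑ b, (M a b) ^ 2 := by
    have expand : ∀ i j, (K i j) ^ 2
        = ∑ a, ∑ b, (v i a * v i b) * (v j a * v j b) := by
      intro i j
      rw [hK, sq, Finset.sum_mul_sum]
      exact Finset.sum_congr rfl fun a _ => Finset.sum_congr rfl fun b _ => by ring
    have expand2 : ∀ a b, (M a b) ^ 2
        = ∑ i, ∑ j, (v i a * v i b) * (v j a * v j b) := by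
      intro a b
      rw [hM, sq, Finset.sum_mul_sum]
    simp only [expand, expand2]
    calc ∑ i, ∑ j, ∑ a, ∑ b, (v i a * v i b) * (v j a * v j b)
        = ∑ i, ∑ a, ∑ j, ∑ b, (v i a * v i b) * (v j a * v j b) :=
          Finset.sum_congr rfl fun i _ => Finset.sum_comm
      _ = ∑ a, ∑ i, ∑ j, ∑ b, (v i a * v i b) * (v j a * v j b) :=
          Finset.sum_comm
      _ = ∑ a, ∑ i, ∑ b, ∑ j, (v i a * v i b) * (v j a * v j b) :=
          Finset.sum_congr rfl fun a _ => Finset.sum_congr rfl fun i _ =>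
            Finset.sum_comm
      _ = ∑ a, ∑ b, ∑ i, ∑ j, (v i a * v i b) * (v j a * v j b) :=
          Finset.sum_congr rfl fun a _ => Finset.sum_comm
  -- trace of M is N
  have hnormsq : ∀ i, ∑ a, v i a * v i a = 1 := by
    intro i
    rw [← hK i i]
    have : (inner ℝ (v i) (v i) : ℝ) = ‖v i‖ ^ 2 := real_inner_self_eq_norm_sq (v i)
    simp only [hKdef]
    rw [this, hv i, one_pow]
  have htr : ∑ a, M a a = (N : ℝ) := by
    rw [hM]
    simp only
    rw [Finset.sum_comm]
    simp [hnormsq]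
  -- Cauchy-Schwarz on the trace
  have h3 : (N : ℝ) ^ 2 ≤ (r : ℝ) * ∑ a, ∑ b, (M a b) ^ 2 := by
    have cs : (∑ a, M a a) ^ 2 ≤ (Finset.univ.card : ℝ) * ∑ a, (M a a) ^ 2 :=
      sq_sum_le_card_mul_sum_sq
    rw [htr] at cs
    simp only [Finset.card_univ, Fintype.card_fin] at cs
    refine cs.trans (mul_le_mul_of_nonneg_left ?_ (by positivity))
    refine Finset.sum_le_sum fun a _ => ?_
    exact Finset.single_le_sum (f := fun b => (M a b) ^ 2)
      (fun b _ => sq_nonneg _) (Finset.mem_univ a)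
  -- split diagonal
  have hdiag : ∀ i, K i i = 1 := by
    intro i; rw [hK]; exact hnormsq i
  have hsplit : ∑ i, ∑ j, (K i j) ^ 2
      = (N : ℝ) + ∑ i, ∑ j ∈ Finset.univ.erase i, (K i j) ^ 2 := by
    have : ∀ i : Fin N, ∑ j, (K i j) ^ 2
        = 1 + ∑ j ∈ Finset.univ.erase i, (K i j) ^ 2 := by
      intro i
      rw [← Finset.add_sum_erase Finset.univ (fun j => (K i j) ^ 2) (Finset.mem_univ i),
        hdiag i, one_pow]
    simp only [this, Finset.sum_add_distrib]
    simp
  -- pick the maximizing off-diagonal pair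
  obtain ⟨p, hp, hmax⟩ := Finset.exists_max_image
    (Finset.univ.filter fun p : Fin N × Fin N => p.1 ≠ p.2)
    (fun p => |K p.1 p.2|)
    ⟨(⟨0, by omega⟩, ⟨1, by omega⟩), by
      simp [Finset.mem_filter, Fin.ext_iff]⟩
  obtain ⟨i₀, j₀⟩ := p
  have hij : i₀ ≠ j₀ := by simpa using (Finset.mem_filter.mp hp).2
  set c : ℝ := |K i₀ j₀| with hc
  have hc0 : 0 ≤ c := abs_nonneg _
  refine ⟨i₀, j₀, hij, ?_⟩
  -- bound the off-diagonal sum by N(N-1)c²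
  have hbound : ∑ i, ∑ j ∈ Finset.univ.erase i, (K i j) ^ 2
      ≤ (N : ℝ) * ((N : ℝ) - 1) * c ^ 2 := by
    have : ∀ i : Fin N, ∑ j ∈ Finset.univ.erase i, (K i j) ^ 2
        ≤ ((N : ℝ) - 1) * c ^ 2 := by
      intro i
      calc ∑ j ∈ Finset.univ.erase i, (K i j) ^ 2
          ≤ ∑ _j ∈ Finset.univ.erase i, c ^ 2 := by
            refine Finset.sum_le_sum fun j hj => ?_
            have hne : i ≠ j := fun h => (Finset.mem_erase.mp hj).1 h.symm
            have := hmax (i, j) (by simp [hne])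
            calc (K i j) ^ 2 = |K i j| ^ 2 := (sq_abs _).symm
              _ ≤ c ^ 2 := by
                exact pow_le_pow_left₀ (abs_nonneg _) this 2
        _ = ((N : ℝ) - 1) * c ^ 2 := by
            rw [Finset.sum_const, Finset.card_erase_of_mem (Finset.mem_univ i),
              Finset.card_univ, Fintype.card_fin, nsmul_eq_mul,
              Nat.cast_sub (by omega : 1 ≤ N), Nat.cast_one]
    calc ∑ i, ∑ j ∈ Finset.univ.erase i, (K i j) ^ 2
        ≤ ∑ _i : Fin N, ((N : ℝ) - 1) * c ^ 2 := Finset.sum_le_sum fun i _ => this i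
      _ = (N : ℝ) * ((N : ℝ) - 1) * c ^ 2 := by
          simp [Finset.card_univ, nsmul_eq_mul]; ring
  -- combine
  have key : ((N : ℝ) - r) / ((r : ℝ) * ((N : ℝ) - 1)) ≤ c ^ 2 := by
    have hNr : (2 : ℝ) ≤ (N : ℝ) := by exact_mod_cast hN
    have hrr : (1 : ℝ) ≤ (r : ℝ) := by exact_mod_cast hr
    have hpos : (0 : ℝ) < (r : ℝ) * ((N : ℝ) - 1) := by nlinarith
    rw [div_le_iff₀ hpos]
    have h4 : (N : ℝ) ^ 2 ≤ (r : ℝ) * ((N : ℝ) + (N : ℝ) * ((N : ℝ) - 1) * c ^ 2) := by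
      calc (N : ℝ) ^ 2 ≤ (r : ℝ) * ∑ a, ∑ b, (M a b) ^ 2 := h3
        _ = (r : ℝ) * ∑ i, ∑ j, (K i j) ^ 2 := by rw [h1]
        _ = (r : ℝ) * ((N : ℝ) + ∑ i, ∑ j ∈ Finset.univ.erase i, (K i j) ^ 2) := by
            rw [hsplit]
        _ ≤ (r : ℝ) * ((N : ℝ) + (N : ℝ) * ((N : ℝ) - 1) * c ^ 2) := by
            refine mul_le_mul_of_nonneg_left (by linarith [hbound]) (by positivity)
    nlinarith
  have := Real.sqrt_le_sqrt key
  rwa [Real.sqrt_sq hc0] at this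
end

section
/- Gerzon bound: If v_1, ..., v_N are unit vectors in R^r such that |⟨v_i, v_j⟩| = α for all i ≠ j with some fixed α < 1, then N ≤ r(r+1)/2. -/
open Finset

/-- Gerzon bound: `N` equiangular unit vectors in `ℝ^r` (with common angle `α < 1`)
satisfy `N ≤ r(r+1)/2`, i.e. `2N ≤ r(r+1)`. -/
theorem gerzon_bound (N r : ℕ) (v : Fin N → EuclideanSpace ℝ (Fin r))
    (hv : ∀ i, ‖v i‖ = 1) (α : ℝ) (hα : α < 1)
    (heq : ∀ i j, i ≠ j → |(inner ℝ (v i) (v j) : ℝ)| = α) :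
    2 * N ≤ r * (r + 1) := by
  set g : Fin N → Sym2 (Fin r) → ℝ :=
    fun i => Sym2.lift ⟨fun a b => v i a * v i b, fun a b => mul_comm _ _⟩ with hg
  have hinner : ∀ k, (inner ℝ (v k) (v k) : ℝ) = 1 := by
    intro k
    rw [real_inner_self_eq_norm_sq, hv k]; norm_num
  have hli : LinearIndependent ℝ g := by
    rw [Fintype.linearIndependent_iff]
    intro c hc j
    have hpt : ∀ a b : Fin r, ∑ i, c i * (v i a * v i b) = 0 := by
      intro a b
      have := congrFun hc (s(a, b))
      simpa [hg] using this
    have key : ∀ j' : Fin N, ∑ i, c i * (inner ℝ (v i) (v j') : ℝ)^2 = 0 := by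
      intro j'
      have hA : ∀ i : Fin N, (inner ℝ (v i) (v j') : ℝ) = ∑ a, v i a * v j' a := by
        intro i
        simp [PiLp.inner_apply, RCLike.inner_apply, mul_comm]
      calc ∑ i, c i * (inner ℝ (v i) (v j') : ℝ)^2
          = ∑ a, ∑ b, (∑ i, c i * (v i a * v i b)) * (v j' a * v j' b) := by
            simp only [hA, sq, Finset.sum_mul, Finset.mul_sum]
            rw [Finset.sum_comm]
            apply Finset.sum_congr rfl
            intro a _
            rw [Finset.sum_comm]
            apply Finset.sum_congr rfl
            intro b _
            apply Finset.sum_congr rfl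
            intro i _
            ring
        _ = 0 := by
            apply Finset.sum_eq_zero; intro a _
            apply Finset.sum_eq_zero; intro b _
            rw [hpt a b, zero_mul]
    set S : ℝ := ∑ i, c i with hS
    have heqj : ∀ j' : Fin N, c j' + α^2 * (S - c j') = 0 := by
      intro j'
      have h1 : ∑ i, c i * (inner ℝ (v i) (v j') : ℝ)^2
          = c j' + α^2 * (S - c j') := by
        rw [← Finset.sum_erase_add _ _ (Finset.mem_univ j'), hinner j']
        rw [show ∑ i ∈ univ.erase j', c i * (inner ℝ (v i) (v j') : ℝ)^2
            = ∑ i ∈ univ.erase j', c i * α^2 by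
          apply Finset.sum_congr rfl
          intro i hi
          rw [← heq i j' (Finset.ne_of_mem_erase hi), sq_abs]]
        rw [← Finset.sum_mul, Finset.sum_erase_eq_sub (Finset.mem_univ j'), ← hS]
        ring
      have := key j'
      rw [h1] at this
      exact this
    have hSsum : S * (1 + (N - 1) * α^2) = 0 := by
      have h2 : ∑ j' : Fin N, (c j' + α^2 * (S - c j')) = 0 :=
        Finset.sum_eq_zero fun j' _ => heqj j'
      have h3 : ∑ j' : Fin N, (c j' + α^2 * (S - c j'))
          = S + α^2 * ((N : ℝ) * S - S) := by
        rw [Finset.sum_add_distrib, ← hS, ← Finset.mul_sum, Finset.sum_sub_distrib,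
          Finset.sum_const, ← hS]
        simp [nsmul_eq_mul]
      rw [h3] at h2
      nlinarith [h2]
    have hNpos : (1 : ℝ) ≤ (N : ℝ) := by
      have : 0 < N := Fin.pos j
      exact_mod_cast this
    have hS0 : S = 0 := by
      have hpos : (0:ℝ) < 1 + (N - 1) * α^2 := by nlinarith [sq_nonneg α]
      rcases mul_eq_zero.mp hSsum with h | h
      · exact h
      · linarith
    have := heqj j
    rw [hS0] at this
    -- c j + α^2 * (0 - c j) = 0, i.e. c j * (1 - α^2) = 0
    by_cases hcase : ∃ k : Fin N, k ≠ j
    · obtain ⟨k, hk⟩ := hcase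
      have hα0 : 0 ≤ α := (heq k j hk) ▸ abs_nonneg _
      have hα2 : α^2 < 1 := by nlinarith
      nlinarith [this]
    · push_neg at hcase
      have huniv : (univ : Finset (Fin N)) = {j} := by
        apply Finset.eq_singleton_iff_unique_mem.mpr
        exact ⟨Finset.mem_univ j, fun x _ => hcase x⟩
      have : S = c j := by rw [hS, huniv, Finset.sum_singleton]
      rw [hS0] at this
      exact this.symm
  have hcard : N ≤ r * (r + 1) / 2 := by
    have h1 := hli.fintype_card_le_finrank
    rw [Module.finrank_fintype_fun_eq_card] at h1
    have h2 : N ≤ (r+1).choose 2 := by simpa [Sym2.card] using h1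
    rwa [Nat.choose_two_right, Nat.add_sub_cancel, Nat.mul_comm] at h2
  have h2 : 2 ∣ r * (r + 1) := (Nat.even_mul_succ_self r).two_dvd
  omega
end

section
/- If v_1, ..., v_N are unit vectors in R^r with |⟨v_i, v_j⟩| = α < 1 for all i ≠ j, then the rank-one matrices v_i v_i^T are linearly independent in the space of symmetric r × r matrices. -/
/-- The outer products `v_i v_i^T` of equiangular unit vectors (angle `α < 1`)
are linearly independent. -/
theorem equiangular_outer_linearIndependent (N r : ℕ)
    (v : Fin N → EuclideanSpace ℝ (Fin r)) (hv : ∀ i, ‖v i‖ = 1)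
    (α : ℝ) (hα : α < 1)
    (heq : ∀ i j, i ≠ j → |(inner ℝ (v i) (v j) : ℝ)| = α) :
    LinearIndependent ℝ
      (fun i : Fin N => Matrix.of fun a b : Fin r => v i a * v i b) := by
  rw [Fintype.linearIndependent_iff]
  intro c hc
  have hinner : ∀ i j, (inner ℝ (v i) (v j) : ℝ) = ∑ a, v i a * v j a := by
    intro i j
    simp [PiLp.inner_apply, RCLike.inner_apply]
    exact Finset.sum_congr rfl fun a _ => mul_comm _ _
  have hab : ∀ a b : Fin r, ∑ i, c i * (v i a * v i b) = 0 := by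
    intro a b
    have h := congrFun (congrFun hc a) b
    simpa [Matrix.sum_apply, Matrix.of_apply, Pi.smul_apply, smul_eq_mul] using h
  have key : ∀ j, ∑ i, c i * (inner ℝ (v i) (v j) : ℝ) ^ 2 = 0 := by
    intro j
    have step : ∑ i, c i * (inner ℝ (v i) (v j) : ℝ) ^ 2
        = ∑ a, ∑ b, v j a * v j b * (∑ i, c i * (v i a * v i b)) := by
      simp_rw [hinner, pow_two, Finset.mul_sum, Finset.sum_mul]
      rw [Finset.sum_comm]
      refine Finset.sum_congr rfl fun a _ => ?_
      rw [Finset.sum_comm]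
      refine Finset.sum_congr rfl fun i _ => ?_
      rw [Finset.mul_sum]
      refine Finset.sum_congr rfl fun b _ => ?_
      ring
    rw [step]
    simp [hab]
  have h1 : ∀ j, (inner ℝ (v j) (v j) : ℝ) = 1 := by
    intro j
    rw [real_inner_self_eq_norm_sq, hv, one_pow]
  have h2 : ∀ i j, i ≠ j → ((inner ℝ (v i) (v j) : ℝ)) ^ 2 = α ^ 2 := by
    intro i j hij
    rw [← sq_abs, heq i j hij]
  set S := ∑ i, c i with hS
  have keq : ∀ j, c j * (1 - α ^ 2) + α ^ 2 * S = 0 := by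
    intro j
    have h := key j
    rw [← Finset.sum_erase_add _ _ (Finset.mem_univ j), h1 j] at h
    have h3 : ∑ i ∈ Finset.univ.erase j, c i * (inner ℝ (v i) (v j) : ℝ) ^ 2
        = α ^ 2 * (S - c j) := by
      rw [Finset.sum_congr rfl (fun i hi => by
        rw [h2 i j (Finset.ne_of_mem_erase hi)]), ← Finset.sum_mul,
        Finset.sum_erase_eq_sub (Finset.mem_univ j)]
      ring
    rw [h3] at h
    linarith
  have hsum : S * (1 - α ^ 2) + (N : ℝ) * (α ^ 2 * S) = 0 := by
    have h := Finset.sum_congr rfl (fun j (_ : j ∈ Finset.univ) => keq j)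
    rw [Finset.sum_const, Finset.sum_add_distrib, ← Finset.sum_mul] at h
    simpa [← hS] using h
  intro j
  rcases Nat.lt_or_ge N 2 with hN | hN
  · -- N = 1 since j : Fin N
    have hN1 : N = 1 := by have := j.pos; omega
    have hSj : S = c j := by
      subst hN1
      simp [hS, Fin.sum_univ_one, Subsingleton.elim (0 : Fin 1) j]
    have h := keq j
    rw [hSj] at h
    linarith [h]
  · -- N ≥ 2 : α ≥ 0
    obtain ⟨k, hk⟩ : ∃ k : Fin N, k ≠ j := by
      rcases Finset.exists_mem_ne
        (by rw [Finset.card_univ, Fintype.card_fin]; omega) j with ⟨k, _, hk⟩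
      exact ⟨k, hk⟩
    have hα0 : 0 ≤ α := by rw [← heq k j hk]; exact abs_nonneg _
    have hα2 : α ^ 2 < 1 := by nlinarith
    have hS0 : S = 0 := by
      have hNge : (2 : ℝ) ≤ (N : ℝ) := by exact_mod_cast hN
      have hfac : S * (1 - α ^ 2 + N * α ^ 2) = 0 := by linear_combination hsum
      have hpos : (0 : ℝ) < 1 - α ^ 2 + N * α ^ 2 := by
        nlinarith [mul_nonneg (by linarith : (0:ℝ) ≤ (N:ℝ)) (sq_nonneg α)]
      rcases mul_eq_zero.1 hfac with h' | h'
      · exact h'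
      · linarith
    have h := keq j
    rw [hS0] at h
    have : c j * (1 - α ^ 2) = 0 := by linarith
    rcases mul_eq_zero.1 this with h' | h'
    · exact h'
    · linarith
end

section
/- Let M be a symmetric psd rN × rN block matrix with M_{[ii]} = I_r, and suppose Mv = Nv where v ≠ 0 is the concatenation of v_1, ..., v_N ∈ R^r. Then all the norms ‖v_i‖ are equal and M_{[ij]} v_j = v_i for all i, j. -/
/-- If `M ⪰ 0` has identity diagonal blocks and `M v = N v` for `v ≠ 0` the concatenation
of `v_1, …, v_N ∈ ℝ^r`, then all `‖v_i‖` are equal and `M_{[ij]} v_j = v_i` for all `i, j`. -/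
theorem blocksym_top_eigenvector (N r : ℕ)
    (M : Matrix (Fin N × Fin r) (Fin N × Fin r) ℝ) (hM : M.PosSemidef)
    (hdiag : ∀ i a b, M (i, a) (i, b) = if a = b then (1 : ℝ) else 0)
    (vs : Fin N → Fin r → ℝ) (v : Fin N × Fin r → ℝ)
    (hv : v = fun p => vs p.1 p.2) (hv0 : v ≠ 0)
    (heig : M.mulVec v = (N : ℝ) • v) :
    (∀ i j, ∑ a, vs i a ^ 2 = ∑ a, vs j a ^ 2) ∧
      (∀ i j, (Matrix.of fun a b : Fin r => M (i, a) (j, b)).mulVec (vs j) = vs i) := by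
  subst hv
  have hsym : ∀ p q, M p q = M q p := fun p q => by
    conv_lhs => rw [← hM.1]
    simp [Matrix.conjTranspose_apply]
  -- notation
  set n : Fin N → ℝ := fun i => ∑ a, vs i a ^ 2 with hn
  set w : Fin N → Fin N → Fin r → ℝ := fun i j a => ∑ c, M (i,a) (j,c) * vs j c with hw
  set b : Fin N → Fin N → ℝ := fun i j => ∑ a, vs i a * w i j a with hb
  -- key PSD inequality
  have key : ∀ (i j : Fin N) (x : Fin r → ℝ),
      2 * (∑ a, x a * w i j a) ≤ (∑ a, x a ^ 2) + n j := by
    intro i j x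
    have hpsd := hM.dotProduct_mulVec_nonneg (fun p => (if p.1 = i then x p.2 else 0) + (if p.1 = j then -vs j p.2 else 0))
    simp only [dotProduct, Matrix.mulVec, Pi.star_apply, star_trivial,
      Fintype.sum_prod_type, add_mul, mul_add, ite_mul, mul_ite, zero_mul, mul_zero,
      Finset.sum_add_distrib, Finset.mul_sum, Finset.sum_ite_eq', Finset.mem_univ, if_true,
      Finset.sum_ite_irrel, Finset.sum_const_zero, neg_mul, mul_neg, Finset.sum_neg_distrib]
      at hpsd
    have hA : ∑ a, ∑ c, x a * (M (i,a) (i,c) * x c) = ∑ a, x a ^ 2 := by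
      simp [hdiag, mul_ite, Finset.sum_ite_eq', sq]
    have hD : ∑ a, ∑ c, vs j a * (M (j,a) (j,c) * vs j c) = n j := by
      simp [hn, hdiag, mul_ite, Finset.sum_ite_eq', sq]
    have hBC : ∑ a, ∑ c, vs j a * (M (j,a) (i,c) * x c)
        = ∑ a, ∑ c, x a * (M (i,a) (j,c) * vs j c) := by
      rw [Finset.sum_comm]
      exact Finset.sum_congr rfl fun a _ => Finset.sum_congr rfl fun c _ => by
        rw [hsym]; ring
    have hC : (∑ a, x a * w i j a) = ∑ a, ∑ c, x a * (M (i,a) (j,c) * vs j c) := by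
      simp [hw, Finset.mul_sum]
    rw [hA, hD, hBC] at hpsd
    rw [hC]
    linarith
  have hn0 : ∀ i, 0 ≤ n i := fun i => Finset.sum_nonneg fun a _ => sq_nonneg _
  -- b i j ≤ (n i + n j)/2
  have hble : ∀ i j, b i j ≤ (n i + n j) / 2 := fun i j => by
    have := key i j (vs i); simp only [hb]; linarith
  -- row sums from the eigenvalue equation
  have hrow : ∀ i, ∑ j, b i j = (N : ℝ) * n i := by
    intro i
    have hE : ∀ a, ∑ j, w i j a = (N : ℝ) * vs i a := by
      intro a
      have := congrFun heig (i, a)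
      simpa [Matrix.mulVec, dotProduct, Fintype.sum_prod_type, hw] using this
    calc ∑ j, b i j = ∑ a, vs i a * ∑ j, w i j a := by
          rw [Finset.sum_comm]; simp [hb, Finset.mul_sum]
      _ = (N : ℝ) * n i := by
          simp only [hE, hn]; rw [Finset.mul_sum]
          exact Finset.sum_congr rfl fun a _ => by ring
  -- total equality forces b i j = (n i + n j)/2
  have htot : ∑ i, ∑ j, ((n i + n j) / 2 - b i j) = 0 := by
    have h1 : ∑ i, ∑ j, ((n i + n j) / 2 - b i j)
        = (∑ i, ∑ j, (n i + n j) / 2) - ∑ i, ∑ j, b i j := by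
      rw [← Finset.sum_sub_distrib]
      exact Finset.sum_congr rfl fun i _ => by rw [← Finset.sum_sub_distrib]
    have h2 : ∑ i : Fin N, ∑ j : Fin N, (n i + n j) / 2 = (N : ℝ) * ∑ i, n i := by
      have : ∀ i : Fin N, ∑ j : Fin N, (n i + n j) / 2
          = ((N : ℝ) * n i) / 2 + (∑ j, n j) / 2 := by
        intro i
        rw [← Finset.sum_div, Finset.sum_add_distrib,
          Finset.sum_const, Finset.card_univ, Fintype.card_fin, nsmul_eq_mul]
        ring
      rw [Finset.sum_congr rfl fun i _ => this i, Finset.sum_add_distrib,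
        Finset.sum_const, Finset.card_univ, Fintype.card_fin, nsmul_eq_mul,
        ← Finset.sum_div, ← Finset.mul_sum]
      ring
    have h3 : ∑ i, ∑ j, b i j = (N : ℝ) * ∑ i, n i := by
      rw [Finset.sum_congr rfl fun i _ => hrow i, ← Finset.mul_sum]
    rw [h1, h2, h3, sub_self]
  have hbeq : ∀ i j, b i j = (n i + n j) / 2 := by
    intro i j
    have hnn : ∀ p ∈ (Finset.univ : Finset (Fin N)), ∀ q ∈ (Finset.univ : Finset (Fin N)),
        0 ≤ (n p + n q) / 2 - b p q := fun p _ q _ => by linarith [hble p q]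
    have h0 : ∀ p ∈ (Finset.univ : Finset (Fin N)),
        0 ≤ ∑ q, ((n p + n q) / 2 - b p q) :=
      fun p _ => Finset.sum_nonneg fun q _ => hnn p (Finset.mem_univ p) q (Finset.mem_univ q)
    have hrowz := (Finset.sum_eq_zero_iff_of_nonneg h0).1 htot i (Finset.mem_univ i)
    have := (Finset.sum_eq_zero_iff_of_nonneg
      (fun q _ => hnn i (Finset.mem_univ i) q (Finset.mem_univ q))).1 hrowz j (Finset.mem_univ j)
    linarith
  -- ‖w i j‖² ≤ n j
  have hwle : ∀ i j, ∑ a, w i j a ^ 2 ≤ n j := by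
    intro i j
    have := key i j (w i j)
    have h : ∑ a, w i j a * w i j a = ∑ a, w i j a ^ 2 :=
      Finset.sum_congr rfl fun a _ => (sq (w i j a)).symm
    linarith [this, h.symm ▸ this]
  -- Cauchy–Schwarz
  have hCS : ∀ i j, b i j ^ 2 ≤ n i * ∑ a, w i j a ^ 2 := fun i j =>
    Finset.sum_mul_sq_le_sq_mul_sq Finset.univ (vs i) (w i j)
  -- Part 1: all norms equal
  have part1 : ∀ i j, n i = n j := by
    intro i j
    have h1 := hCS i j
    have h2 := hwle i j
    have h3 := hbeq i j
    nlinarith [hn0 i, hn0 j, sq_nonneg (n i - n j)]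
  refine ⟨part1, ?_⟩
  -- Part 2
  intro i j
  have hzero : ∑ a, (w i j a - vs i a) ^ 2 ≤ 0 := by
    have hexp : ∑ a, (w i j a - vs i a) ^ 2
        = (∑ a, w i j a ^ 2) - 2 * b i j + n i := by
      simp only [hb, hn, sub_sq]
      rw [Finset.sum_add_distrib, Finset.sum_sub_distrib, Finset.mul_sum]
      congr 1
      congr 1
      exact Finset.sum_congr rfl fun a _ => by ring
    rw [hexp, hbeq i j, part1 i j]
    linarith [hwle i j]
  have hz : ∀ a ∈ (Finset.univ : Finset (Fin r)), (w i j a - vs i a) ^ 2 = 0 := by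
    apply (Finset.sum_eq_zero_iff_of_nonneg (fun a _ => sq_nonneg _)).1
    exact le_antisymm hzero (Finset.sum_nonneg fun a _ => sq_nonneg _)
  funext a
  have := hz a (Finset.mem_univ a)
  have hwa : w i j a = vs i a := by
    have := pow_eq_zero_iff (n := 2) (by norm_num) |>.1 this
    linarith [sub_eq_zero.1 this]
  simpa [Matrix.mulVec, dotProduct, hw] using hwa
end

section
/- Spectral decomposition of the partial transpose of a rank-one matrix: let V = Σ σ_i y_i z_i^T be an SVD with r ≤ N, v = vec(V). Then (vv^T)^Γ = Σ_i σ_i² d_i d_i^T + Σ_{i<j} σ_i σ_j s_{ij} s_{ij}^T − Σ_{i<j} σ_i σ_j a_{ij} a_{ij}^T, where d_i = z_i ⊗ y_i, s_{ij} = (z_i ⊗ y_j + z_j ⊗ y_i)/√2, a_{ij} = (z_i ⊗ y_j − z_j ⊗ y_i)/√2, and these r² vectors are orthonormal. -/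
open Matrix

open Finset in
lemma sum_split {ι M : Type*} [Fintype ι] [LinearOrder ι] [AddCommMonoid M] (F : ι → ι → M) :
    ∑ i, ∑ j, F i j = ∑ i, F i i
      + ∑ p ∈ univ.filter (fun p : ι × ι => p.1 < p.2), (F p.1 p.2 + F p.2 p.1) := by
  have h0 : ∑ i, ∑ j, F i j = ∑ p : ι × ι, F p.1 p.2 := by
    rw [← Finset.sum_product']; rw [Finset.univ_product_univ]
  rw [h0, ← Finset.sum_filter_add_sum_filter_not Finset.univ (fun p : ι × ι => p.1 = p.2)]
  have h1 : ∑ p ∈ univ.filter (fun p : ι × ι => p.1 = p.2), F p.1 p.2 = ∑ i, F i i := by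
    rw [Finset.sum_filter]
    rw [← Finset.univ_product_univ, Finset.sum_product]
    apply Finset.sum_congr rfl; intros; simp
  rw [h1]
  congr 1
  rw [← Finset.sum_filter_add_sum_filter_not _ (fun p : ι × ι => p.1 < p.2),
    Finset.filter_filter, Finset.filter_filter, Finset.sum_add_distrib]
  congr 1
  · apply Finset.sum_congr _ (fun _ _ => rfl)
    ext p; simp only [Finset.mem_filter, Finset.mem_univ, true_and]
    exact ⟨fun h => h.2, fun h => ⟨ne_of_lt h, h⟩⟩
  · apply Finset.sum_nbij' (fun p : ι × ι => (p.2, p.1)) (fun p : ι × ι => (p.2, p.1)) <;>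
      simp only [Finset.mem_filter, Finset.mem_univ, true_and]
    · rintro ⟨a, b⟩ ⟨h1, h2⟩
      exact lt_of_le_of_ne (not_lt.mp h2) (fun h => h1 h.symm)
    · rintro ⟨a, b⟩ h
      exact ⟨Ne.symm (ne_of_lt h), not_lt.mpr h.le⟩
    · intros; trivial
    · intros; trivial
    · intros; trivial

lemma dot_tensor {N r : ℕ} (z1 z2 : Fin N → ℝ) (y1 y2 : Fin r → ℝ) :
    (fun p : Fin N × Fin r => z1 p.1 * y1 p.2) ⬝ᵥ (fun p => z2 p.1 * y2 p.2)
      = (z1 ⬝ᵥ z2) * (y1 ⬝ᵥ y2) := by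
  simp only [dotProduct, Fintype.sum_prod_type, Finset.sum_mul, Finset.mul_sum]
  rw [Finset.sum_comm]
  apply Finset.sum_congr rfl; intros; apply Finset.sum_congr rfl; intros; ring



/-- The partial transpose of an `rN × rN` matrix viewed as an `N × N` array of `r × r`
blocks: each block is transposed. -/
def partialTranspose {N r : ℕ} (M : Matrix (Fin N × Fin r) (Fin N × Fin r) ℝ) :
    Matrix (Fin N × Fin r) (Fin N × Fin r) ℝ :=
  Matrix.of fun p q => M (p.1, q.2) (q.1, p.2)

/-- Spectral decomposition of the partial transpose of `v vᵀ` for `v = vec(V)`,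
`V = Σ σ_i y_i z_iᵀ` an SVD with `r ≤ N`; the vectors `d_i`, `s_{ij}`, `a_{ij}`
form an orthonormal family of `r²` vectors. -/
theorem partialTranspose_rank_one (r N : ℕ) (hrN : r ≤ N)
    (σ : Fin r → ℝ) (hσ : ∀ i, 0 ≤ σ i)
    (y : Fin r → Fin r → ℝ) (z : Fin r → Fin N → ℝ)
    (hy : ∀ i j, y i ⬝ᵥ y j = if i = j then (1 : ℝ) else 0)
    (hz : ∀ i j, z i ⬝ᵥ z j = if i = j then (1 : ℝ) else 0)
    (V : Matrix (Fin r) (Fin N) ℝ)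
    (hV : V = ∑ i, σ i • Matrix.vecMulVec (y i) (z i))
    (v : Fin N × Fin r → ℝ) (hv : v = fun p => V p.2 p.1)
    (dv : Fin r → Fin N × Fin r → ℝ)
    (hd : dv = fun i p => z i p.1 * y i p.2)
    (sv av : Fin r → Fin r → Fin N × Fin r → ℝ)
    (hs : sv = fun i j p => (z i p.1 * y j p.2 + z j p.1 * y i p.2) / Real.sqrt 2)
    (ha : av = fun i j p => (z i p.1 * y j p.2 - z j p.1 * y i p.2) / Real.sqrt 2)
    (w : Fin r × Fin r → Fin N × Fin r → ℝ)
    (hw : w = fun p => if p.1 = p.2 then dv p.1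
      else if p.1 < p.2 then sv p.1 p.2 else av p.2 p.1) :
    partialTranspose (Matrix.vecMulVec v v)
        = ∑ i, (σ i) ^ 2 • Matrix.vecMulVec (dv i) (dv i)
          + ∑ p ∈ Finset.univ.filter (fun p : Fin r × Fin r => p.1 < p.2),
              (σ p.1 * σ p.2) • Matrix.vecMulVec (sv p.1 p.2) (sv p.1 p.2)
          - ∑ p ∈ Finset.univ.filter (fun p : Fin r × Fin r => p.1 < p.2),
              (σ p.1 * σ p.2) • Matrix.vecMulVec (av p.1 p.2) (av p.1 p.2)
      ∧ ∀ p q : Fin r × Fin r, w p ⬝ᵥ w q = if p = q then (1 : ℝ) else 0 := by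
  subst hw hs ha hd hv hV
  have h2 : Real.sqrt 2 * Real.sqrt 2 = 2 := Real.mul_self_sqrt (by norm_num)
  constructor
  · ext ⟨p1, p2⟩ ⟨q1, q2⟩
    simp only [partialTranspose, Matrix.of_apply, Matrix.vecMulVec_apply, Matrix.sub_apply,
      Matrix.add_apply, Matrix.sum_apply, Matrix.smul_apply, Finset.sum_apply, smul_eq_mul]
    rw [Finset.sum_mul_sum]
    rw [sum_split (fun i j => σ i * (y i q2 * z i p1) * (σ j * (y j p2 * z j q1)))]
    rw [add_sub_assoc, ← Finset.sum_sub_distrib]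
    congr 1
    · apply Finset.sum_congr rfl; intro i _
      ring
    · apply Finset.sum_congr rfl; intro p _
      rw [div_mul_div_comm, div_mul_div_comm, h2]
      ring
  · have h2i : (Real.sqrt 2 : ℝ)⁻¹ * (Real.sqrt 2)⁻¹ = 1/2 := by
      rw [← mul_inv, h2]; norm_num
    have key : ∀ a b c d : Fin r,
        ((fun p : Fin N × Fin r => z a p.1 * y b p.2) ⬝ᵥ fun p => z c p.1 * y d p.2)
          = (if a = c then (1:ℝ) else 0) * (if b = d then 1 else 0) := by
      intro a b c d; rw [dot_tensor, hz, hy]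
    have hrepS : ∀ a b : Fin r,
        (fun p : Fin N × Fin r => (z a p.1 * y b p.2 + z b p.1 * y a p.2) / Real.sqrt 2)
          = (Real.sqrt 2)⁻¹ • ((fun p : Fin N × Fin r => z a p.1 * y b p.2)
              + fun p => z b p.1 * y a p.2) := by
      intro a b; funext p
      simp only [Pi.smul_apply, Pi.add_apply, smul_eq_mul, div_eq_inv_mul]
    have hrepA : ∀ a b : Fin r,
        (fun p : Fin N × Fin r => (z a p.1 * y b p.2 - z b p.1 * y a p.2) / Real.sqrt 2)
          = (Real.sqrt 2)⁻¹ • ((fun p : Fin N × Fin r => z a p.1 * y b p.2)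
              - fun p => z b p.1 * y a p.2) := by
      intro a b; funext p
      simp only [Pi.smul_apply, Pi.sub_apply, smul_eq_mul, div_eq_inv_mul]
    intro p q
    obtain ⟨i, i'⟩ := p; obtain ⟨j, j'⟩ := q
    simp only [Prod.mk.injEq]
    rcases lt_trichotomy i i' with hii | hii | hii <;>
      rcases lt_trichotomy j j' with hjj | hjj | hjj
    · -- s s
      rw [if_neg (ne_of_lt hii), if_pos hii, if_neg (ne_of_lt hjj), if_pos hjj, hrepS, hrepS]
      simp only [smul_dotProduct, dotProduct_smul, add_dotProduct, dotProduct_add, key,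
        smul_eq_mul]
      rw [← mul_add, ← mul_assoc, h2i]
      split_ifs <;> first | (exfalso; omega) | norm_num
    · -- s d
      rw [if_neg (ne_of_lt hii), if_pos hii, if_pos hjj, hrepS]
      simp only [smul_dotProduct, add_dotProduct, key, smul_eq_mul]
      split_ifs <;> first | (exfalso; omega) | norm_num
    · -- s a
      rw [if_neg (ne_of_lt hii), if_pos hii, if_neg (ne_of_gt hjj),
        if_neg (not_lt.mpr hjj.le), hrepS, hrepA]
      simp only [smul_dotProduct, dotProduct_smul, add_dotProduct, dotProduct_sub, key,
        smul_eq_mul]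
      rw [← mul_sub, ← mul_assoc, h2i]
      split_ifs <;> first | (exfalso; omega) | norm_num
    · -- d s
      rw [if_pos hii, if_neg (ne_of_lt hjj), if_pos hjj, hrepS]
      simp only [dotProduct_smul, dotProduct_add, key, smul_eq_mul]
      split_ifs <;> first | (exfalso; omega) | norm_num
    · -- d d
      rw [if_pos hii, if_pos hjj, key]
      split_ifs <;> first | (exfalso; omega) | norm_num
    · -- d a
      rw [if_pos hii, if_neg (ne_of_gt hjj), if_neg (not_lt.mpr hjj.le), hrepA]
      simp only [dotProduct_smul, dotProduct_sub, key, smul_eq_mul]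
      split_ifs <;> first | (exfalso; omega) | norm_num
    · -- a s
      rw [if_neg (ne_of_gt hii), if_neg (not_lt.mpr hii.le), if_neg (ne_of_lt hjj),
        if_pos hjj, hrepA, hrepS]
      simp only [smul_dotProduct, dotProduct_smul, sub_dotProduct, dotProduct_add, key,
        smul_eq_mul]
      rw [← mul_add, ← mul_assoc, h2i]
      split_ifs <;> first | (exfalso; omega) | norm_num
    · -- a d
      rw [if_neg (ne_of_gt hii), if_neg (not_lt.mpr hii.le), if_pos hjj, hrepA]
      simp only [smul_dotProduct, sub_dotProduct, key, smul_eq_mul]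
      split_ifs <;> first | (exfalso; omega) | norm_num
    · -- a a
      rw [if_neg (ne_of_gt hii), if_neg (not_lt.mpr hii.le), if_neg (ne_of_gt hjj),
        if_neg (not_lt.mpr hjj.le), hrepA, hrepA]
      simp only [smul_dotProduct, dotProduct_smul, sub_dotProduct, dotProduct_sub, key,
        smul_eq_mul]
      rw [← mul_sub, ← mul_assoc, h2i]
      split_ifs <;> first | (exfalso; omega) | norm_num
end

section
/- For any V ∈ R^{r×N} with v = vec(V), the matrix I_N ⊗ (V V^T) − (vv^T)^Γ is positive semidefinite. -/
open Matrix

private lemma sum_rot' {α β γ : Type*} [Fintype α] [Fintype β] [Fintype γ]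
    (f : α → β → γ → ℝ) :
    ∑ a, ∑ b, ∑ c, f a b c = ∑ c, ∑ a, ∑ b, f a b c := by
  have h1 : ∀ a : α, ∑ b, ∑ c, f a b c = ∑ c, ∑ b, f a b c := fun a => Finset.sum_comm
  simp_rw [h1]
  exact Finset.sum_comm

private lemma quad_form_eq (r N : ℕ) (V : Matrix (Fin r) (Fin N) ℝ) (x : Fin N × Fin r → ℝ)
    (B : Fin N → Fin N → ℝ) (hB : B = fun i k => ∑ a, x (i, a) * V a k) :
    (∑ p : Fin N × Fin r, x p * ∑ q : Fin N × Fin r,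
      ((if p.1 = q.1 then 1 else 0) * (∑ k, V p.2 k * V q.2 k) - V q.2 p.1 * V p.2 q.1) * x q)
      = (∑ i, ∑ k, B i k * B i k) - ∑ i, ∑ j, B i j * B j i := by
  subst hB
  simp only [Fintype.sum_prod_type, mul_sub, sub_mul, Finset.mul_sum, Finset.sum_mul,
    ite_mul, one_mul, zero_mul, Finset.sum_sub_distrib, mul_ite, mul_zero, mul_one]
  congr 1
  · simp only [Finset.sum_ite_irrel, Finset.sum_const_zero, Finset.sum_ite_eq,
      Finset.mem_univ, if_true]
    refine Finset.sum_congr rfl fun i _ => ?_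
    rw [sum_rot' (fun a b k => x (i, a) * (V a k * V b k * x (i, b)))]
    exact Finset.sum_congr rfl fun k _ => Finset.sum_congr rfl fun a _ =>
      Finset.sum_congr rfl fun b _ => by ring
  · refine Finset.sum_congr rfl fun i _ => ?_
    rw [show (∑ a, ∑ j, ∑ b, x (i, a) * (V b i * V a j * x (j, b)))
        = ∑ j, ∑ a, ∑ b, x (i, a) * (V b i * V a j * x (j, b)) from Finset.sum_comm]
    refine Finset.sum_congr rfl fun j _ => ?_
    rw [show (∑ a, ∑ b, x (i, a) * (V b i * V a j * x (j, b)))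
        = ∑ b, ∑ a, x (i, a) * (V b i * V a j * x (j, b)) from Finset.sum_comm]
    exact Finset.sum_congr rfl fun b _ =>
      Finset.sum_congr rfl fun a _ => by ring

private lemma quad_nonneg {N : ℕ} (B : Fin N → Fin N → ℝ) :
    0 ≤ (∑ i, ∑ k, B i k * B i k) - ∑ i, ∑ j, B i j * B j i := by
  have h : ∑ i, ∑ j, (B i j - B j i) ^ 2
      = 2 * ((∑ i, ∑ k, B i k * B i k) - ∑ i, ∑ j, B i j * B j i) := by
    have hterm : ∀ i j, (B i j - B j i) ^ 2
        = B i j * B i j + B j i * B j i - 2 * (B i j * B j i) := fun i j => by ring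
    simp_rw [hterm, Finset.sum_sub_distrib, Finset.sum_add_distrib, ← Finset.mul_sum]
    rw [show (∑ i, ∑ j, B j i * B j i) = ∑ j, ∑ i, B j i * B j i from Finset.sum_comm]
    ring
  have hsq : 0 ≤ ∑ i, ∑ j, (B i j - B j i) ^ 2 :=
    Finset.sum_nonneg fun i _ => Finset.sum_nonneg fun j _ => sq_nonneg _
  linarith

/-- For any `V ∈ ℝ^{r×N}` with `v = vec(V)`, the matrix `I_N ⊗ (V Vᵀ) − (v vᵀ)^Γ`
is positive semidefinite. -/
theorem kron_sub_partialTranspose_posSemidef (r N : ℕ)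
    (V : Matrix (Fin r) (Fin N) ℝ)
    (v : Fin N × Fin r → ℝ) (hv : v = fun p => V p.2 p.1) :
    (Matrix.kroneckerMap (· * ·) (1 : Matrix (Fin N) (Fin N) ℝ) (V * Vᵀ)
        - partialTranspose (Matrix.vecMulVec v v)).PosSemidef := by
  subst hv
  refine Matrix.posSemidef_iff_dotProduct_mulVec.mpr ⟨?_, ?_⟩
  · ext ⟨i, a⟩ ⟨j, b⟩
    simp only [Matrix.sub_apply, Matrix.conjTranspose_apply, star_trivial,
      Matrix.kroneckerMap_apply, partialTranspose, Matrix.of_apply,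
      Matrix.vecMulVec_apply, Matrix.mul_apply, Matrix.one_apply,
      Matrix.transpose_apply]
    rw [show ((if j = i then (1:ℝ) else 0)) = if i = j then 1 else 0 by simp [eq_comm],
      show (∑ k, V b k * V a k) = ∑ k, V a k * V b k from
        Finset.sum_congr rfl fun k _ => mul_comm _ _]
    ring
  · intro x
    have key := quad_form_eq r N V x (fun i k => ∑ a, x (i, a) * V a k) rfl
    have hnn := quad_nonneg (fun i k => ∑ a, x (i, a) * V a k)
    calc (0 : ℝ) ≤ _ := hnn
    _ = _ := key.symm
    _ = star x ⬝ᵥ ((Matrix.kroneckerMap (· * ·) (1 : Matrix (Fin N) (Fin N) ℝ) (V * Vᵀ)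
        - partialTranspose (Matrix.vecMulVec (fun p => V p.2 p.1) (fun p => V p.2 p.1))) *ᵥ x) := by
      simp only [star_trivial, dotProduct, Matrix.mulVec, Matrix.sub_apply,
        Matrix.kroneckerMap_apply, partialTranspose, Matrix.of_apply,
        Matrix.vecMulVec_apply, Matrix.mul_apply, Matrix.one_apply,
        Matrix.transpose_apply]
end

section
/- For full-rank V ∈ R^{r×N} with r ≤ N and v = vec(V), the kernel of I_N ⊗ (V V^T) − (vv^T)^Γ equals {vec(S V) : S ∈ R^{r×r} symmetric}; in particular its dimension is r(r+1)/2. -/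
open Matrix

/-- For full-rank `V ∈ ℝ^{r×N}` with `r ≤ N` and `v = vec(V)`, the kernel of
`I_N ⊗ (V Vᵀ) − (v vᵀ)^Γ` is `{vec(S V) : S symmetric}`, of dimension `r(r+1)/2`. -/
theorem kernel_eq_sym_subspace (r N : ℕ) (hrN : r ≤ N)
    (V : Matrix (Fin r) (Fin N) ℝ) (hrank : V.rank = r)
    (v : Fin N × Fin r → ℝ) (hv : v = fun p => V p.2 p.1)
    (A : Matrix (Fin N × Fin r) (Fin N × Fin r) ℝ)
    (hA : A = Matrix.kroneckerMap (· * ·) (1 : Matrix (Fin N) (Fin N) ℝ) (V * Vᵀ)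
        - partialTranspose (Matrix.vecMulVec v v)) :
    {x : Fin N × Fin r → ℝ | A.mulVec x = 0}
        = {x | ∃ S : Matrix (Fin r) (Fin r) ℝ, S.IsSymm ∧ x = fun p => (S * V) p.2 p.1}
      ∧ Module.finrank ℝ (LinearMap.ker A.mulVecLin) = r * (r + 1) / 2 := by
  subst hv hA
  set G : Matrix (Fin r) (Fin r) ℝ := V * Vᵀ with hGdef
  clear_value G
  have hGsymm : Gᵀ = G := by
    rw [hGdef, Matrix.transpose_mul, Matrix.transpose_transpose]
  have hGunit : IsUnit G := by
    rw [← Matrix.mulVec_surjective_iff_isUnit]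
    have hrk : G.rank = r := by
      rw [hGdef, Matrix.rank_self_mul_transpose, hrank]
    have htop : LinearMap.range G.mulVecLin = ⊤ := by
      apply Submodule.eq_top_of_finrank_eq
      rw [Module.finrank_fintype_fun_eq_card, Fintype.card_fin]
      exact hrk
    intro y
    obtain ⟨x, hx⟩ := LinearMap.range_eq_top.mp htop y
    exact ⟨x, hx⟩
  obtain ⟨B, hGB, hBG⟩ : ∃ B : Matrix (Fin r) (Fin r) ℝ, G * B = 1 ∧ B * G = 1 :=
    ⟨↑hGunit.unit⁻¹, hGunit.mul_val_inv, hGunit.val_inv_mul⟩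
  have hBsymm : Bᵀ = B := by
    have h1 : Bᵀ * G = 1 := by
      calc Bᵀ * G = Bᵀ * Gᵀ := by rw [hGsymm]
        _ = (G * B)ᵀ := (Matrix.transpose_mul G B).symm
        _ = 1 := by rw [hGB, Matrix.transpose_one]
    calc Bᵀ = Bᵀ * (G * B) := by rw [hGB, Matrix.mul_one]
      _ = (Bᵀ * G) * B := (Matrix.mul_assoc _ _ _).symm
      _ = B := by rw [h1, Matrix.one_mul]
  -- reshape a vector into an r × N matrix
  set X : (Fin N × Fin r → ℝ) → Matrix (Fin r) (Fin N) ℝ :=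
    fun x => Matrix.of fun i n => x (n, i) with hXdef
  have key : ∀ (x : Fin N × Fin r → ℝ) (p : Fin N × Fin r),
      (Matrix.kroneckerMap (· * ·) (1 : Matrix (Fin N) (Fin N) ℝ) G
        - partialTranspose (Matrix.vecMulVec (fun p => V p.2 p.1) (fun p => V p.2 p.1))).mulVec x p
      = (G * X x) p.2 p.1 - (V * (X x)ᵀ * V) p.2 p.1 := by
    intro x ⟨n, i⟩
    simp only [Matrix.mulVec, dotProduct, Matrix.sub_apply, Matrix.kroneckerMap_apply,
      partialTranspose, Matrix.vecMulVec_apply, Matrix.of_apply, Matrix.mul_apply,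
      Matrix.transpose_apply, Matrix.one_apply, hXdef]
    rw [Fintype.sum_prod_type]
    simp only [sub_mul, Finset.sum_sub_distrib]
    congr 1
    · rw [Finset.sum_comm]
      simp [ite_mul]
    · rw [Finset.sum_comm]
      refine Finset.sum_congr rfl fun j _ => ?_
      rw [Finset.sum_mul]
      refine Finset.sum_congr rfl fun m _ => ?_
      ring
  have hker_iff : ∀ x : Fin N × Fin r → ℝ,
      (Matrix.kroneckerMap (· * ·) (1 : Matrix (Fin N) (Fin N) ℝ) G
        - partialTranspose (Matrix.vecMulVec (fun p => V p.2 p.1) (fun p => V p.2 p.1))).mulVec x = 0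
      ↔ G * X x = V * (X x)ᵀ * V := by
    intro x
    constructor
    · intro h
      ext i n
      have := congrFun h (n, i)
      rw [key] at this
      simpa [sub_eq_zero] using this
    · intro h
      funext p
      rw [key, h]
      simp
  -- the set equality
  have hset : {x : Fin N × Fin r → ℝ |
      (Matrix.kroneckerMap (· * ·) (1 : Matrix (Fin N) (Fin N) ℝ) G
        - partialTranspose (Matrix.vecMulVec (fun p => V p.2 p.1) (fun p => V p.2 p.1))).mulVec x = 0}
      = {x | ∃ S : Matrix (Fin r) (Fin r) ℝ, S.IsSymm ∧ x = fun p => (S * V) p.2 p.1} := by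
    ext x
    simp only [Set.mem_setOf_eq]
    rw [hker_iff]
    constructor
    · intro h
      set M : Matrix (Fin r) (Fin N) ℝ := X x with hMdef
      refine ⟨B * (V * Mᵀ), ?_, ?_⟩
      · -- symmetry
        have h2 : G * M * Vᵀ = V * Mᵀ * G := by
          calc G * M * Vᵀ = (V * Mᵀ * V) * Vᵀ := by rw [h]
            _ = V * Mᵀ * (V * Vᵀ) := Matrix.mul_assoc _ _ _
            _ = V * Mᵀ * G := by rw [← hGdef]
        have h3 : M * Vᵀ * B = B * (V * Mᵀ) := by
          calc M * Vᵀ * B = 1 * (M * Vᵀ * B) := (Matrix.one_mul _).symm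
            _ = B * G * (M * Vᵀ * B) := by rw [hBG]
            _ = B * (G * M * Vᵀ) * B := by simp only [Matrix.mul_assoc]
            _ = B * (V * Mᵀ * G) * B := by rw [h2]
            _ = B * (V * Mᵀ) * (G * B) := by simp only [Matrix.mul_assoc]
            _ = B * (V * Mᵀ) := by rw [hGB, Matrix.mul_one]
        show (B * (V * Mᵀ))ᵀ = B * (V * Mᵀ)
        rw [Matrix.transpose_mul, Matrix.transpose_mul, Matrix.transpose_transpose, hBsymm]
        calc Mᵀᵀ * Vᵀ * B = M * Vᵀ * B := by rw [Matrix.transpose_transpose]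
          _ = B * (V * Mᵀ) := h3
      · have hSV : B * (V * Mᵀ) * V = M := by
          calc B * (V * Mᵀ) * V = B * (V * Mᵀ * V) := by simp only [Matrix.mul_assoc]
            _ = B * (G * M) := by rw [← h]
            _ = B * G * M := (Matrix.mul_assoc _ _ _).symm
            _ = M := by rw [hBG, Matrix.one_mul]
        funext p
        rw [hSV]
        rfl
    · rintro ⟨S, hS, rfl⟩
      have hX : X (fun p => (S * V) p.2 p.1) = S * V := rfl
      rw [hX]
      have hT : (S * V)ᵀ = Vᵀ * S := by rw [Matrix.transpose_mul, hS.eq]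
      rw [hT, hGdef]
      simp only [Matrix.mul_assoc]
  refine ⟨hset, ?_⟩
  -- dimension count via Sym2
  set Φ : (Sym2 (Fin r) → ℝ) →ₗ[ℝ] (Fin N × Fin r → ℝ) :=
    { toFun := fun f p => ∑ j, f s(p.2, j) * V j p.1
      map_add' := by
        intro f g
        funext p
        simp [add_mul, Finset.sum_add_distrib]
      map_smul' := by
        intro c f
        funext p
        simp [Finset.mul_sum, mul_assoc] } with hΦdef
  have hΦ_apply : ∀ (f : Sym2 (Fin r) → ℝ) (p : Fin N × Fin r),
      Φ f p = ((Matrix.of fun i j => f s(i, j)) * V) p.2 p.1 := by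
    intro f p
    simp [hΦdef, Matrix.mul_apply]
  have hrange : LinearMap.range Φ =
      LinearMap.ker (Matrix.kroneckerMap (· * ·) (1 : Matrix (Fin N) (Fin N) ℝ) G
        - partialTranspose (Matrix.vecMulVec (fun p => V p.2 p.1) (fun p => V p.2 p.1))).mulVecLin := by
    ext x
    rw [LinearMap.mem_range, LinearMap.mem_ker, Matrix.mulVecLin_apply]
    have hmem := Set.ext_iff.mp hset x
    simp only [Set.mem_setOf_eq] at hmem
    rw [hmem]
    constructor
    · rintro ⟨f, rfl⟩
      refine ⟨Matrix.of fun i j => f s(i, j), ?_, ?_⟩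
      · show (Matrix.of fun i j => f s(i, j))ᵀ = _
        ext i j
        simp only [Matrix.transpose_apply, Matrix.of_apply]
        rw [Sym2.eq_swap]
      · funext p
        rw [hΦ_apply]
    · rintro ⟨S, hS, rfl⟩
      refine ⟨Sym2.lift ⟨fun i j => S i j, fun i j => hS.apply j i⟩, ?_⟩
      funext p
      rw [hΦ_apply]
      have hM : (Matrix.of fun i j =>
          Sym2.lift ⟨fun i j => S i j, fun i j => hS.apply j i⟩ s(i, j)) = S := by
        ext i j
        simp
      rw [hM]
  have hinj : Function.Injective Φ := by
    rw [← LinearMap.ker_eq_bot, LinearMap.ker_eq_bot']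
    intro f hf
    set S : Matrix (Fin r) (Fin r) ℝ := Matrix.of fun i j => f s(i, j) with hSdef
    have hSV : S * V = 0 := by
      ext i n
      have := congrFun hf (n, i)
      rw [hΦ_apply] at this
      simpa using this
    have hSG : S * G = 0 := by
      rw [hGdef, ← Matrix.mul_assoc, hSV, Matrix.zero_mul]
    have hS0 : S = 0 := by
      calc S = S * (G * B) := by rw [hGB, Matrix.mul_one]
        _ = (S * G) * B := (Matrix.mul_assoc _ _ _).symm
        _ = 0 := by rw [hSG, Matrix.zero_mul]
    funext z
    induction z using Sym2.ind with
    | _ i j =>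
      have : S i j = 0 := by rw [hS0]; rfl
      simpa [hSdef] using this
  rw [← hrange, LinearMap.finrank_range_of_inj hinj,
    Module.finrank_fintype_fun_eq_card, Sym2.card, Fintype.card_fin,
    Nat.choose_two_right]
  simp [Nat.mul_comm]
end

section
/- Let v_1, ..., v_N ∈ R^r form a unit norm tight frame with columns matrix V and v = vec(V). Define D := vv^T − (vv^T)^Γ + I_N ⊗ (V V^T). Then D ⪰ vv^T, Tr(D) = N², and the off-diagonal blocks D_{[ij]} = v_i v_j^T − v_j v_i^T (i ≠ j) are antisymmetric. -/
open Matrix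

/-- For a UNTF with columns matrix `V` and `v = vec(V)`, the matrix
`D := v vᵀ − (v vᵀ)^Γ + I_N ⊗ (V Vᵀ)` satisfies `D ⪰ v vᵀ`, `Tr(D) = N²`, and its
off-diagonal blocks are `D_{[ij]} = v_i v_jᵀ − v_j v_iᵀ` (antisymmetric). -/
theorem dual_certificate (N r : ℕ)
    (v : Fin N → Fin r → ℝ) (hv : ∀ i, ∑ a, v i a ^ 2 = 1)
    (htight : ∑ i, Matrix.vecMulVec (v i) (v i)
        = ((N : ℝ) / r) • (1 : Matrix (Fin r) (Fin r) ℝ))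
    (V : Matrix (Fin r) (Fin N) ℝ) (hV : ∀ a i, V a i = v i a)
    (w : Fin N × Fin r → ℝ) (hw : w = fun p => v p.1 p.2)
    (D : Matrix (Fin N × Fin r) (Fin N × Fin r) ℝ)
    (hD : D = Matrix.vecMulVec w w - partialTranspose (Matrix.vecMulVec w w)
        + Matrix.kroneckerMap (· * ·) (1 : Matrix (Fin N) (Fin N) ℝ) (V * Vᵀ)) :
    (D - Matrix.vecMulVec w w).PosSemidef
      ∧ D.trace = (N : ℝ) ^ 2
      ∧ ∀ i j : Fin N, i ≠ j → ∀ a b : Fin r,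
          D (i, a) (j, b) = v i a * v j b - v j a * v i b := by
  -- entry formula for V * Vᵀ
  have hVVT : ∀ a b : Fin r, (V * Vᵀ) a b = ∑ k, v k a * v k b := by
    intro a b
    simp [Matrix.mul_apply, hV]
  -- entry formula for D
  have hDe : ∀ i j : Fin N, ∀ a b : Fin r, D (i, a) (j, b)
      = v i a * v j b - v i b * v j a
        + (if i = j then (1:ℝ) else 0) * ∑ k, v k a * v k b := by
    intro i j a b
    simp [hD, partialTranspose, Matrix.vecMulVec_apply, Matrix.kroneckerMap, hw, hVVT,
      Matrix.one_apply]
  -- entry formula for D - w wᵀ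
  have hAe : ∀ i j : Fin N, ∀ a b : Fin r, (D - Matrix.vecMulVec w w) (i, a) (j, b)
      = (if i = j then (1:ℝ) else 0) * (∑ k, v k a * v k b) - v i b * v j a := by
    intro i j a b
    simp [Matrix.sub_apply, hDe, Matrix.vecMulVec_apply, hw]
    ring
  refine ⟨Matrix.PosSemidef.of_dotProduct_mulVec_nonneg ?_ ?_, ?_, ?_⟩
  · -- Hermitian
    ext ⟨i, a⟩ ⟨j, b⟩
    simp only [Matrix.conjTranspose_apply, star_trivial, hAe]
    rcases eq_or_ne i j with h | h
    · subst h
      rw [Finset.sum_congr rfl fun k _ => mul_comm (v k b) (v k a)]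
      ring
    · rw [if_neg (Ne.symm h), if_neg h]
      ring
  · -- nonnegativity of the quadratic form
    intro x
    set s : Fin N → Fin N → ℝ := fun i j => ∑ a, x (i, a) * v j a with hs
    have inner : ∀ (i : Fin N) (a : Fin r),
        (∑ q : Fin N × Fin r, (D - Matrix.vecMulVec w w) (i, a) q * x q)
          = (∑ k, v k a * s i k) - ∑ j, v j a * s j i := by
      intro i a
      rw [Fintype.sum_prod_type]
      simp only [hAe, sub_mul, ite_mul, one_mul, zero_mul, Finset.sum_sub_distrib]
      congr 1
      · rw [Finset.sum_comm]
        simp only [Finset.sum_ite_eq, Finset.mem_univ, if_true]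
        simp only [Finset.sum_mul]
        rw [Finset.sum_comm]
        refine Finset.sum_congr rfl fun k _ => ?_
        rw [show s i k = ∑ b, x (i, b) * v k b from rfl, Finset.mul_sum]
        exact Finset.sum_congr rfl fun b _ => by ring
      · refine Finset.sum_congr rfl fun j _ => ?_
        rw [show s j i = ∑ b, x (j, b) * v i b from rfl, Finset.mul_sum]
        exact Finset.sum_congr rfl fun b _ => by ring
    have key : dotProduct (star x) ((D - Matrix.vecMulVec w w) *ᵥ x)
        = (∑ i, ∑ j, s i j * s i j) - ∑ i, ∑ j, s i j * s j i := by
      simp only [star_trivial, Matrix.mulVec, dotProduct]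
      rw [Fintype.sum_prod_type]
      simp only [inner]
      simp only [mul_sub, Finset.sum_sub_distrib]
      congr 1
      · refine Finset.sum_congr rfl fun i _ => ?_
        simp only [Finset.mul_sum]
        rw [Finset.sum_comm]
        refine Finset.sum_congr rfl fun k _ => ?_
        rw [show s i k = ∑ a, x (i, a) * v k a from rfl, Finset.sum_mul]
        exact Finset.sum_congr rfl fun a _ => by ring
      · refine Finset.sum_congr rfl fun i _ => ?_
        simp only [Finset.mul_sum]
        rw [Finset.sum_comm]
        refine Finset.sum_congr rfl fun j _ => ?_
        rw [show s i j * s j i = (∑ a, x (i, a) * v j a) * s j i from rfl,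
          Finset.sum_mul]
        exact Finset.sum_congr rfl fun a _ => by ring
    rw [key]
    have e1 : ∀ i j : Fin N, (s i j - s j i) ^ 2
        = (s i j * s i j + s j i * s j i) - 2 * (s i j * s j i) := by intros; ring
    have h2 : ∑ i, ∑ j, (s i j - s j i) ^ 2
        = 2 * ((∑ i, ∑ j, s i j * s i j) - ∑ i, ∑ j, s i j * s j i) := by
      simp only [e1, Finset.sum_sub_distrib, Finset.sum_add_distrib, ← Finset.mul_sum]
      have c1 : ∑ i : Fin N, ∑ j : Fin N, s j i * s j i
          = ∑ i : Fin N, ∑ j : Fin N, s i j * s i j := Finset.sum_comm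
      rw [c1]
      ring
    have h3 : 0 ≤ ∑ i, ∑ j, (s i j - s j i) ^ 2 :=
      Finset.sum_nonneg fun i _ => Finset.sum_nonneg fun j _ => sq_nonneg _
    linarith
  · -- trace
    rcases Nat.eq_zero_or_pos r with hr | hr
    · have hN : N = 0 := by
        by_contra hN
        have i : Fin N := ⟨0, Nat.pos_of_ne_zero hN⟩
        have := hv i
        subst hr
        simp at this
      subst hN hr
      simp [Matrix.trace]
    · have hVVT' : V * Vᵀ = ((N : ℝ) / r) • (1 : Matrix (Fin r) (Fin r) ℝ) := by
        rw [← htight]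
        ext a b
        rw [hVVT]
        simp [Matrix.sum_apply, Matrix.vecMulVec_apply]
      have ht : D.trace = ∑ p : Fin N × Fin r, ((N : ℝ) / r) * (if p.2 = p.2 then 1 else 0) := by
        rw [Matrix.trace]
        refine Finset.sum_congr rfl fun p _ => ?_
        simp [Matrix.diag, hD, partialTranspose, hVVT', Matrix.one_apply,
          Matrix.kroneckerMap, Matrix.smul_apply]
      rw [ht]
      simp only [if_pos rfl, mul_one]
      rw [Finset.sum_const]
      simp only [Finset.card_univ, Fintype.card_prod, Fintype.card_fin, nsmul_eq_mul]
      have hr' : (r : ℝ) ≠ 0 := Nat.cast_ne_zero.mpr hr.ne'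
      push_cast
      field_simp
  · -- off-diagonal blocks
    intro i j hij a b
    rw [hDe, if_neg hij]
    ring
end

section
/- Separable witness implies cut polytope membership (converse direction): if X ∈ C^N with X = Gram(v_1,...,v_N) for v_i ∈ R^r, then there exist m ≥ 1, nonnegative ρ_k summing to 1, and sign vectors d_k ∈ {±1}^N with X = Σ_k ρ_k d_k d_k^T; moreover the matrix M with blocks M_{[ij]} = Z^T D_i D_j Z (where D_i = diag((d_k)_i)_k and Z^T Z = I_r maps v_i to R^{1/2}(column of signs)) is psd, has identity diagonal blocks, symmetric off-diagonal blocks, and satisfies v^T M v = N², where v is the concatenation of the v_i. -/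
open Matrix

private lemma aux_dot_sq {ι κ : Type*} [Fintype ι] [Fintype κ] (w : κ → ι → ℝ) (x : ι → ℝ) :
    x ⬝ᵥ (Matrix.of fun p q => ∑ k, w k p * w k q).mulVec x
      = ∑ k, (∑ p, w k p * x p) ^ 2 := by
  have h1 : ∀ p q, x p * ((∑ k, w k p * w k q) * x q)
      = ∑ k, (w k p * x p) * (w k q * x q) := by
    intro p q
    rw [Finset.sum_mul, Finset.mul_sum]
    exact Finset.sum_congr rfl fun k _ => by ring
  calc x ⬝ᵥ (Matrix.of fun p q => ∑ k, w k p * w k q).mulVec x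
      = ∑ p, ∑ q, x p * ((∑ k, w k p * w k q) * x q) := by
        simp only [dotProduct, Matrix.mulVec, Matrix.of_apply, Finset.mul_sum]
    _ = ∑ p, ∑ q, ∑ k, (w k p * x p) * (w k q * x q) := by
        exact Finset.sum_congr rfl fun p _ => Finset.sum_congr rfl fun q _ => h1 p q
    _ = ∑ p, ∑ k, ∑ q, (w k p * x p) * (w k q * x q) := by
        exact Finset.sum_congr rfl fun p _ => Finset.sum_comm
    _ = ∑ k, ∑ p, ∑ q, (w k p * x p) * (w k q * x q) := Finset.sum_comm
    _ = ∑ k, (∑ p, w k p * x p) ^ 2 := by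
        refine Finset.sum_congr rfl fun k _ => ?_
        rw [sq, Finset.sum_mul_sum]

private lemma aux_psd {ι κ : Type*} [Fintype ι] [Fintype κ] (w : κ → ι → ℝ) :
    (Matrix.of fun p q => ∑ k, w k p * w k q).PosSemidef := by
  refine Matrix.posSemidef_iff_dotProduct_mulVec.mpr ⟨?_, ?_⟩
  · ext p q
    simp only [Matrix.conjTranspose_apply, Matrix.of_apply, star_trivial]
    exact Finset.sum_congr rfl fun k _ => by ring
  · intro x
    rw [star_trivial, aux_dot_sq]
    exact Finset.sum_nonneg fun k _ => sq_nonneg _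

/-- If `X = Gram(v_1, …, v_N)` lies in the cut polytope, then `X` is a convex
combination of sign matrices `d dᵀ`, and there is a witness `M ∈ B(N, r)` (psd, identity
diagonal blocks, symmetric off-diagonal blocks) with `vᵀ M v = N²`, where `v` is the
concatenation of the `v_i`. -/
theorem cut_polytope_separable_witness (N r : ℕ)
    (v : Fin N → Fin r → ℝ) (X : Matrix (Fin N) (Fin N) ℝ)
    (hX : ∀ i j, X i j = v i ⬝ᵥ v j)
    (hcut : X ∈ convexHull ℝ {A : Matrix (Fin N) (Fin N) ℝ |
      ∃ x : Fin N → ℝ, (∀ i, x i = 1 ∨ x i = -1) ∧ A = Matrix.vecMulVec x x}) :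
    (∃ (m : ℕ) (ρ : Fin m → ℝ) (d : Fin m → Fin N → ℝ),
        0 < m ∧ (∀ k, 0 ≤ ρ k) ∧ ∑ k, ρ k = 1
          ∧ (∀ k i, d k i = 1 ∨ d k i = -1)
          ∧ X = ∑ k, ρ k • Matrix.vecMulVec (d k) (d k))
      ∧ ∃ M : Matrix (Fin N × Fin r) (Fin N × Fin r) ℝ, M.PosSemidef
          ∧ (∀ i a b, M (i, a) (i, b) = if a = b then (1 : ℝ) else 0)
          ∧ (∀ i j a b, M (i, a) (j, b) = M (i, b) (j, a))
          ∧ (fun p : Fin N × Fin r => v p.1 p.2)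
              ⬝ᵥ M.mulVec (fun p : Fin N × Fin r => v p.1 p.2) = (N : ℝ) ^ 2 := by
  -- Step 1: extract a finite convex combination
  rw [convexHull_eq] at hcut
  obtain ⟨ι, t, wgt, zf, hw0, hw1, hzs, hcm⟩ := hcut
  obtain ⟨m, ρ, d, hm, hρ0, hρ1, hd, hXsum⟩ :
      ∃ (m : ℕ) (ρ : Fin m → ℝ) (d : Fin m → Fin N → ℝ),
        0 < m ∧ (∀ k, 0 ≤ ρ k) ∧ ∑ k, ρ k = 1
          ∧ (∀ k i, d k i = 1 ∨ d k i = -1)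
          ∧ X = ∑ k, ρ k • Matrix.vecMulVec (d k) (d k) := by
    set m := t.card with hmdef
    have e : {x // x ∈ t} ≃ Fin m := t.equivFin
    have htne : t.Nonempty := Finset.nonempty_of_sum_ne_zero (by rw [hw1]; norm_num)
    refine ⟨m, fun k => wgt (e.symm k).1, fun k => Classical.choose (hzs _ (e.symm k).2),
      Finset.card_pos.mpr htne, fun k => hw0 _ (e.symm k).2, ?_, ?_, ?_⟩
    · exact (Equiv.sum_comp e.symm (fun x : {x // x ∈ t} => wgt x.1)).trans
        (Finset.sum_coe_sort t wgt) |>.trans hw1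
    · intro k i
      exact (Classical.choose_spec (hzs _ (e.symm k).2)).1 i
    · have hA : ∀ k : Fin m, zf (e.symm k).1
          = Matrix.vecMulVec (Classical.choose (hzs _ (e.symm k).2))
              (Classical.choose (hzs _ (e.symm k).2)) :=
        fun k => (Classical.choose_spec (hzs _ (e.symm k).2)).2
      rw [← hcm, Finset.centerMass_eq_of_sum_1 _ _ hw1]
      calc ∑ i ∈ t, wgt i • zf i
          = ∑ x : {x // x ∈ t}, wgt x.1 • zf x.1 := (Finset.sum_coe_sort t _).symm
        _ = ∑ k : Fin m, wgt (e.symm k).1 • zf (e.symm k).1 :=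
            (Equiv.sum_comp e.symm (fun x : {x // x ∈ t} => wgt x.1 • zf x.1)).symm
        _ = _ := Finset.sum_congr rfl fun k _ => by rw [hA k]
  refine ⟨⟨m, ρ, d, hm, hρ0, hρ1, hd, hXsum⟩, ?_⟩
  -- Step 2: build the witness M
  classical
  -- basic matrices / linear maps
  set E := EuclideanSpace ℝ (Fin r) with hE
  let eqv : (Fin r → ℝ) ≃ₗ[ℝ] E := (WithLp.linearEquiv 2 ℝ (Fin r → ℝ)).symm
  let Cm : Matrix (Fin r) (Fin N) ℝ := Matrix.of fun a i => v i a
  let Um : Matrix (Fin m) (Fin N) ℝ := Matrix.of fun k i => Real.sqrt (ρ k) * d k i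
  let φ0 : (Fin N → ℝ) →ₗ[ℝ] (Fin r → ℝ) := Cm.mulVecLin
  let ψ : (Fin N → ℝ) →ₗ[ℝ] (Fin m → ℝ) := Um.mulVecLin
  let φ : (Fin N → ℝ) →ₗ[ℝ] E := eqv.toLinearMap ∘ₗ φ0
  -- the two Gram matrices agree
  have hXij : ∀ i j, ∑ k, ρ k * (d k i * d k j) = ∑ a, v i a * v j a := by
    intro i j
    have h1 : X i j = ∑ k, ρ k * (d k i * d k j) := by
      rw [hXsum]
      simp [Matrix.sum_apply, Matrix.vecMulVec_apply]
    have h2 : X i j = ∑ a, v i a * v j a := hX i j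
    rw [← h1, h2]
  have key : Umᵀ * Um = Cmᵀ * Cm := by
    ext i j
    simp only [Matrix.mul_apply, Matrix.transpose_apply, Um, Cm, Matrix.of_apply]
    calc ∑ k, (Real.sqrt (ρ k) * d k i) * (Real.sqrt (ρ k) * d k j)
        = ∑ k, ρ k * (d k i * d k j) := by
          refine Finset.sum_congr rfl fun k _ => ?_
          rw [show (Real.sqrt (ρ k) * d k i) * (Real.sqrt (ρ k) * d k j)
            = (Real.sqrt (ρ k) * Real.sqrt (ρ k)) * (d k i * d k j) by ring,
            Real.mul_self_sqrt (hρ0 k)]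
      _ = ∑ a, v i a * v j a := hXij i j
  have hdot : ∀ x y : Fin N → ℝ, ψ x ⬝ᵥ ψ y = φ0 x ⬝ᵥ φ0 y := by
    intro x y
    have gen : ∀ (s : ℕ) (A : Matrix (Fin s) (Fin N) ℝ),
        (A.mulVec x) ⬝ᵥ (A.mulVec y) = x ⬝ᵥ (Aᵀ * A).mulVec y := by
      intro s A
      calc (A.mulVec x) ⬝ᵥ (A.mulVec y) = (x ᵥ* Aᵀ) ⬝ᵥ (A.mulVec y) := by
            rw [Matrix.vecMul_transpose]
        _ = x ⬝ᵥ (Aᵀ.mulVec (A.mulVec y)) := (Matrix.dotProduct_mulVec x Aᵀ _).symm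
        _ = x ⬝ᵥ ((Aᵀ * A).mulVec y) := by rw [Matrix.mulVec_mulVec]
    show (Um.mulVec x) ⬝ᵥ (Um.mulVec y) = (Cm.mulVec x) ⬝ᵥ (Cm.mulVec y)
    rw [gen m Um, gen r Cm, key]
  -- the isometry T on the span of the v's
  have hker : LinearMap.ker φ ≤ LinearMap.ker ψ := by
    intro x hx
    have hx0 : φ0 x = 0 := by
      have : eqv (φ0 x) = 0 := hx
      simpa using congrArg eqv.symm this
    have : ψ x ⬝ᵥ ψ x = 0 := by rw [hdot, hx0]; simp
    exact dotProduct_self_eq_zero.mp this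
  set S : Submodule ℝ E := LinearMap.range φ with hS
  let T : S →ₗ[ℝ] (Fin m → ℝ) :=
    ((LinearMap.ker φ).liftQ ψ hker) ∘ₗ (φ.quotKerEquivRange).symm.toLinearMap
  have hT : ∀ x : Fin N → ℝ, T ⟨φ x, LinearMap.mem_range_self φ x⟩ = ψ x := by
    intro x
    have h1 : φ.quotKerEquivRange (Submodule.Quotient.mk x)
        = ⟨φ x, LinearMap.mem_range_self φ x⟩ :=
      Subtype.ext (LinearMap.quotKerEquivRange_apply_mk φ x)
    have h2 : (φ.quotKerEquivRange).symm ⟨φ x, LinearMap.mem_range_self φ x⟩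
        = Submodule.Quotient.mk x := by
      rw [← h1, LinearEquiv.symm_apply_apply]
    show ((LinearMap.ker φ).liftQ ψ hker)
        ((φ.quotKerEquivRange).symm ⟨φ x, LinearMap.mem_range_self φ x⟩) = ψ x
    rw [h2, Submodule.liftQ_apply]
  have hTinner : ∀ s t : S, T s ⬝ᵥ T t = ∑ c, (s : E) c * (t : E) c := by
    intro s t
    obtain ⟨xs, hxs⟩ := s.2
    obtain ⟨ys, hys⟩ := t.2
    have hs : s = ⟨φ xs, LinearMap.mem_range_self φ xs⟩ := Subtype.ext hxs.symm
    have ht : t = ⟨φ ys, LinearMap.mem_range_self φ ys⟩ := Subtype.ext hys.symm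
    rw [hs, ht, hT, hT]
    have : (φ0 xs) ⬝ᵥ (φ0 ys) = ∑ c, (φ xs : E) c * (φ ys : E) c := rfl
    rw [hdot, this]
  -- orthogonal projection onto S and the global isometry ZL
  let P := S.orthogonalProjectionOnto
  let ZL : E →ₗ[ℝ] ((Fin m ⊕ Fin r) → ℝ) :=
    { toFun := fun x => Sum.elim (T (P x)) (fun c => x c - (P x : E) c)
      map_add' := by
        intro x y
        funext k
        cases k with
        | inl a => simp [Sum.elim_inl]
        | inr c =>
            simp only [Sum.elim_inr, map_add, Submodule.coe_add, Pi.add_apply]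
            have e1 : (x + y) c = x c + y c := rfl
            have e2 : ((P x : E) + (P y : E)) c = (P x : E) c + (P y : E) c := rfl
            rw [e1, e2]; ring
      map_smul' := by
        intro a x
        funext k
        cases k with
        | inl b => simp [Sum.elim_inl]
        | inr c =>
            simp only [Sum.elim_inr, _root_.map_smul, SetLike.val_smul,
              RingHom.id_apply, smul_eq_mul, Pi.smul_apply]
            have e1 : (a • x) c = a * x c := rfl
            have e2 : (a • (P x : E)) c = a * (P x : E) c := rfl
            rw [e1, e2]; ring }
  have oh1 : ∀ x y : E, ∑ c, (x c - (P x : E) c) * (P y : E) c = 0 := by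
    intro x y
    have h := Submodule.starProjection_inner_eq_zero (K := S) x ((P y : E)) (P y).2
    have h2 : (inner ℝ (x - ↑(P x)) (↑(P y) : E) : ℝ)
        = ∑ c, (x c - (P x : E) c) * (P y : E) c := by
      rw [PiLp.inner_apply]
      exact Finset.sum_congr rfl fun c _ => by
        rw [RCLike.inner_apply', starRingEnd_apply, star_trivial, PiLp.sub_apply]
    rw [← h2]
    exact h
  have oh2 : ∀ x y : E, ∑ c, (P x : E) c * (y c - (P y : E) c) = 0 := by
    intro x y
    have h := oh1 y x
    rw [← h]
    exact Finset.sum_congr rfl fun c _ => by ring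
  have K1 : ∀ x y : E, ZL x ⬝ᵥ ZL y = ∑ c, x c * y c := by
    intro x y
    show (Sum.elim (T (P x)) (fun c => x c - (P x : E) c)) ⬝ᵥ
      (Sum.elim (T (P y)) (fun c => y c - (P y : E) c)) = ∑ c, x c * y c
    rw [dotProduct, Fintype.sum_sum_type]
    simp only [Sum.elim_inl, Sum.elim_inr]
    have h1 : ∑ a, T (P x) a * T (P y) a = ∑ c, (P x : E) c * (P y : E) c := hTinner _ _
    rw [h1, ← Finset.sum_add_distrib]
    have h2 : ∀ c, (P x : E) c * (P y : E) c + (x c - (P x : E) c) * (y c - (P y : E) c)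
        = x c * y c - (x c - (P x : E) c) * (P y : E) c - (P x : E) c * (y c - (P y : E) c) := by
      intro c; ring
    rw [Finset.sum_congr rfl fun c _ => h2 c, Finset.sum_sub_distrib, Finset.sum_sub_distrib,
      oh1, oh2, sub_zero, sub_zero]
  have K2 : ∀ (x : E) (hx : x ∈ S), ZL x = Sum.elim (T ⟨x, hx⟩) (fun _ => 0) := by
    intro x hx
    have hPx : P x = ⟨x, hx⟩ := Submodule.orthogonalProjectionOnto_mem_subspace_eq_self (⟨x, hx⟩ : S)
    show Sum.elim (T (P x)) (fun c => x c - (P x : E) c) = _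
    rw [hPx]
    funext k
    cases k with
    | inl a => rfl
    | inr c => simp [Sum.elim_inr]
  -- standard basis vectors and their images
  let ea : Fin r → E := fun a => eqv (fun j => if a = j then (1 : ℝ) else 0)
  have hea : ∀ a c, (ea a) c = if a = c then (1 : ℝ) else 0 := fun a c => rfl
  let zv : Fin r → (Fin m ⊕ Fin r) → ℝ := fun a => ZL (ea a)
  have hzdot : ∀ a b, ∑ k, zv a k * zv b k = if a = b then (1 : ℝ) else 0 := by
    intro a b
    have := K1 (ea a) (ea b)
    rw [dotProduct] at this
    rw [this]
    simp only [hea]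
    rcases eq_or_ne a b with h | h
    · subst h
      rw [Finset.sum_eq_single a]
      · simp
      · intro c _ hc; simp [Ne.symm hc]
      · simp
    · rw [Finset.sum_eq_zero, if_neg h]
      intro c _
      rcases eq_or_ne a c with h1 | h1
      · subst h1; simp [Ne.symm h]
      · simp [h1]
  -- images of the v i under ZL
  let u' : Fin N → (Fin m ⊕ Fin r) → ℝ :=
    fun i => Sum.elim (fun k => Real.sqrt (ρ k) * d k i) (fun _ => 0)
  have hψsingle : ∀ i, ψ (Pi.single i 1) = fun k => Real.sqrt (ρ k) * d k i := by
    intro i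
    show Um.mulVec (Pi.single i 1) = _
    rw [Matrix.mulVec_single]
    funext k
    simp [Um]
  have hφ0single : ∀ i, φ0 (Pi.single i 1) = v i := by
    intro i
    show Cm.mulVec (Pi.single i 1) = v i
    rw [Matrix.mulVec_single]
    funext a
    simp [Cm]
  have hZφ : ∀ i, ZL (φ (Pi.single i 1)) = u' i := by
    intro i
    rw [K2 _ (LinearMap.mem_range_self φ _), hT]
    funext k
    cases k with
    | inl a => simp [u', hψsingle i]
    | inr c => rfl
  have hvsum : ∀ i, φ (Pi.single i 1) = ∑ a, v i a • ea a := by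
    intro i
    have h0 : φ0 (Pi.single i 1) = v i := hφ0single i
    show eqv (φ0 (Pi.single i 1)) = ∑ a, v i a • ea a
    rw [h0]
    conv_lhs => rw [pi_eq_sum_univ (v i)]
    rw [_root_.map_sum]
    refine Finset.sum_congr rfl fun a _ => ?_
    rw [_root_.map_smul]
  have hZv : ∀ i k, ∑ a, v i a * zv a k = u' i k := by
    intro i k
    have h1 : ZL (φ (Pi.single i 1)) = ∑ a, v i a • zv a := by
      rw [hvsum i, _root_.map_sum]
      exact Finset.sum_congr rfl fun a _ => by rw [_root_.map_smul]
    have h2 := congrFun (h1.symm.trans (hZφ i)) k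
    rw [← h2, Finset.sum_apply]
    exact Finset.sum_congr rfl fun a _ => by simp
  -- the witness matrix
  let d' : (Fin m ⊕ Fin r) → Fin N → ℝ := Sum.elim d (fun _ _ => 1)
  have hd' : ∀ k i, d' k i * d' k i = 1 := by
    intro k i
    cases k with
    | inl k0 => rcases hd k0 i with h | h <;> simp [d', h]
    | inr c => simp [d']
  let wv : (Fin m ⊕ Fin r) → (Fin N × Fin r) → ℝ := fun k p => d' k p.1 * zv p.2 k
  refine ⟨Matrix.of fun p q => ∑ k, wv k p * wv k q, aux_psd wv, ?_, ?_, ?_⟩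
  · -- diagonal blocks
    intro i a b
    show ∑ k, (d' k i * zv a k) * (d' k i * zv b k) = _
    rw [← hzdot a b]
    refine Finset.sum_congr rfl fun k _ => ?_
    rw [show (d' k i * zv a k) * (d' k i * zv b k) = (d' k i * d' k i) * (zv a k * zv b k)
      by ring, hd' k i, one_mul]
  · -- block symmetry
    intro i j a b
    show ∑ k, (d' k i * zv a k) * (d' k j * zv b k) = ∑ k, (d' k i * zv b k) * (d' k j * zv a k)
    exact Finset.sum_congr rfl fun k _ => by ring
  · -- the value v ⬝ M v
    rw [aux_dot_sq wv]
    have hinner : ∀ k, ∑ p : Fin N × Fin r, wv k p * v p.1 p.2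
        = ∑ i, d' k i * u' i k := by
      intro k
      rw [Fintype.sum_prod_type]
      refine Finset.sum_congr rfl fun i _ => ?_
      rw [← hZv i k, Finset.mul_sum]
      exact Finset.sum_congr rfl fun a _ => by simp [wv]; ring
    rw [Finset.sum_congr rfl fun k _ => by rw [hinner k]]
    rw [Fintype.sum_sum_type]
    have hl : ∀ k0 : Fin m, (∑ i, d' (Sum.inl k0) i * u' i (Sum.inl k0)) ^ 2
        = (N : ℝ) ^ 2 * ρ k0 := by
      intro k0
      have : ∀ i, d' (Sum.inl k0) i * u' i (Sum.inl k0) = Real.sqrt (ρ k0) := by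
        intro i
        show d k0 i * (Real.sqrt (ρ k0) * d k0 i) = Real.sqrt (ρ k0)
        rcases hd k0 i with h | h <;> rw [h] <;> ring
      rw [Finset.sum_congr rfl fun i _ => this i, Finset.sum_const, Finset.card_univ,
        Fintype.card_fin, nsmul_eq_mul, mul_pow, Real.sq_sqrt (hρ0 k0)]
    have hr : ∀ c : Fin r, (∑ i, d' (Sum.inr c) i * u' i (Sum.inr c)) ^ 2 = 0 := by
      intro c
      have hz : ∀ i ∈ Finset.univ, d' (Sum.inr c) i * u' i (Sum.inr c) = 0 := by
        intro i _
        show d' (Sum.inr c) i * 0 = 0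
        ring
      rw [Finset.sum_eq_zero hz]
      norm_num
    rw [Finset.sum_congr rfl fun k0 _ => hl k0, Finset.sum_congr rfl fun c _ => hr c,
      Finset.sum_const, ← Finset.mul_sum, hρ1]
    simp
end

section
/- With N = r(r+1)/2 unit vectors forming an equiangular tight frame in R^r (r > 1), the Gram matrix X is an extreme point of the elliptope E^N = {X ⪰ 0, diag(X) = 1} but has rank r > 1, hence X is not a cut matrix xx^T. -/
open Matrix

private def phiMap (r : ℕ) : (Sym2 (Fin r) → ℝ) →ₗ[ℝ] Matrix (Fin r) (Fin r) ℝ where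
  toFun f := Matrix.of fun a b => f s(a, b)
  map_add' f g := by ext a b; simp
  map_smul' c f := by ext a b; simp

private def qMap {N r : ℕ} (v : Fin N → EuclideanSpace ℝ (Fin r)) :
    Matrix (Fin r) (Fin r) ℝ →ₗ[ℝ] (Fin N → ℝ) where
  toFun A := fun i => ∑ a, ∑ b, v i a * A a b * v i b
  map_add' A B := by
    funext i
    simp only [Matrix.add_apply, Pi.add_apply]
    rw [← Finset.sum_add_distrib]
    refine Finset.sum_congr rfl fun a _ => ?_
    rw [← Finset.sum_add_distrib]
    exact Finset.sum_congr rfl fun b _ => by ring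
  map_smul' c A := by
    funext i
    simp only [Matrix.smul_apply, smul_eq_mul, RingHom.id_apply, Pi.smul_apply]
    rw [Finset.mul_sum]
    refine Finset.sum_congr rfl fun a _ => ?_
    rw [Finset.mul_sum]
    exact Finset.sum_congr rfl fun b _ => by ring

/-- The Gram matrix of a maximal equiangular tight frame (`N = r(r+1)/2`, `r > 1`)
is an extreme point of the elliptope of rank `r > 1`; in particular it is not a cut
matrix `x xᵀ`. -/
theorem maximal_etf_extreme_not_cut (N r : ℕ) (hr : 1 < r) (hNr : 2 * N = r * (r + 1))
    (v : Fin N → EuclideanSpace ℝ (Fin r)) (hv : ∀ i, ‖v i‖ = 1)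
    (htight : ∑ i, Matrix.vecMulVec (fun a => v i a) (fun a => v i a)
        = ((N : ℝ) / r) • (1 : Matrix (Fin r) (Fin r) ℝ))
    (α : ℝ) (hang : ∀ i j, i ≠ j → |(inner ℝ (v i) (v j) : ℝ)| = α)
    (X : Matrix (Fin N) (Fin N) ℝ) (hX : ∀ i j, X i j = (inner ℝ (v i) (v j) : ℝ)) :
    X ∈ Set.extremePoints ℝ
        {Y : Matrix (Fin N) (Fin N) ℝ | Y.PosSemidef ∧ ∀ i, Y i i = 1}
      ∧ X.rank = r
      ∧ ¬ ∃ x : Fin N → ℝ, (∀ i, x i = 1 ∨ x i = -1) ∧ X = Matrix.vecMulVec x x := by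
  classical
  have hN3 : 3 ≤ N := by nlinarith
  have hNpos : (0:ℝ) < N := by exact_mod_cast Nat.lt_of_lt_of_le (by norm_num) hN3
  have hrpos : (0:ℝ) < r := by exact_mod_cast Nat.lt_of_lt_of_le (by norm_num) hr
  set κ : ℝ := (N:ℝ)/(r:ℝ) with hκ
  have hκpos : 0 < κ := div_pos hNpos hrpos
  set V : Matrix (Fin r) (Fin N) ℝ := Matrix.of (fun a i => v i a) with hV
  have hinner : ∀ i j, (inner ℝ (v i) (v j) : ℝ) = ∑ a, v i a * v j a := fun i j => by
    simp [PiLp.inner_apply, RCLike.inner_apply, mul_comm]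
  have hXV : X = Vᵀ * V := by
    ext i j
    rw [hX i j, hinner]
    simp [Matrix.mul_apply, hV]
  have hVVt : V * Vᵀ = κ • 1 := by
    rw [← htight]
    ext a b
    simp [Matrix.mul_apply, Matrix.sum_apply, Matrix.vecMulVec_apply, hV]
  have hXsym : Xᵀ = X := by
    ext i j
    simp only [Matrix.transpose_apply, hX]
    exact real_inner_comm _ _
  have hXsymm' : ∀ i j, X j i = X i j := fun i j => congrFun (congrFun hXsym i) j
  have hXdiag : ∀ i, X i i = 1 := fun i => by
    rw [hX, real_inner_self_eq_norm_sq, hv i, one_pow]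
  have hXX : X * X = κ • X := by
    have h1 : X * X = Vᵀ * ((V * Vᵀ) * V) := by rw [hXV]; simp only [Matrix.mul_assoc]
    rw [h1, hVVt, Matrix.smul_mul, Matrix.one_mul, Matrix.mul_smul, ← hXV]
  have hXpsd : X.PosSemidef := by
    refine Matrix.PosSemidef.of_dotProduct_mulVec_nonneg ?_ ?_
    · ext i j
      simp only [Matrix.conjTranspose_apply, star_trivial]
      exact hXsymm' i j
    · intro u
      have h2 : star u ⬝ᵥ X *ᵥ u = (V *ᵥ u) ⬝ᵥ (V *ᵥ u) := by
        rw [star_trivial, hXV, ← Matrix.mulVec_mulVec, Matrix.dotProduct_mulVec,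
          Matrix.vecMul_transpose]
      rw [h2, dotProduct]
      exact Finset.sum_nonneg fun a _ => mul_self_nonneg _
  have hVrank : V.rank = r := by
    have h1 : ((κ⁻¹ • V) * Vᵀ) = 1 := by
      rw [Matrix.smul_mul, hVVt, smul_smul, inv_mul_cancel₀ (ne_of_gt hκpos), one_smul]
    refine le_antisymm (le_trans (Matrix.rank_le_card_height V) (by simp)) ?_
    calc r = (κ • (1:Matrix (Fin r) (Fin r) ℝ)).rank := by
          rw [Matrix.rank_of_isUnit]
          · exact (Fintype.card_fin r).symm
          · rw [Matrix.isUnit_iff_isUnit_det, Matrix.det_smul, Matrix.det_one, mul_one]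
            exact isUnit_iff_ne_zero.mpr (pow_ne_zero _ (ne_of_gt hκpos))
      _ = (V * Vᵀ).rank := by rw [hVVt]
      _ ≤ V.rank := Matrix.rank_mul_le_left _ _
  have hXrank : X.rank = r := by rw [hXV, Matrix.rank_transpose_mul_self, hVrank]
  have hnotcut : ¬ ∃ x : Fin N → ℝ, (∀ i, x i = 1 ∨ x i = -1) ∧ X = Matrix.vecMulVec x x := by
    rintro ⟨x, -, hxx⟩
    have h1 : X.rank ≤ 1 := by
      rw [hxx, Matrix.vecMulVec_eq (Fin 1)]
      exact le_trans (Matrix.rank_mul_le_left _ _)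
        ((Matrix.rank_le_card_width (Matrix.replicateCol (Fin 1) x)).trans (by simp))
    rw [hXrank] at h1
    omega
  -- angle facts
  have hXoff : ∀ i j, i ≠ j → (X i j)^2 = α^2 := fun i j h => by
    rw [hX i j, ← sq_abs, hang i j h]
  have htr1 : (X*X).trace = ∑ i, ∑ j, (X i j)^2 := by
    rw [Matrix.trace]
    simp only [Matrix.diag_apply, Matrix.mul_apply]
    exact Finset.sum_congr rfl fun i _ => Finset.sum_congr rfl fun j _ => by
      rw [hXsymm' i j, sq]
  have htr2 : (X*X).trace = κ * N := by
    rw [hXX, Matrix.trace_smul]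
    have h3 : X.trace = N := by
      rw [Matrix.trace]
      simp [Matrix.diag_apply, hXdiag]
    rw [h3, smul_eq_mul]
  have hrow : ∀ i, ∑ j, (X i j)^2 = 1 + ((N:ℝ) - 1) * α^2 := fun i => by
    rw [← Finset.add_sum_erase _ _ (Finset.mem_univ i), hXdiag i, one_pow]
    congr 1
    rw [Finset.sum_congr rfl (fun j hj => hXoff i j (Ne.symm (Finset.ne_of_mem_erase hj))),
      Finset.sum_const, Finset.card_erase_of_mem (Finset.mem_univ i), Finset.card_univ,
      Fintype.card_fin, nsmul_eq_mul, Nat.cast_sub (by omega), Nat.cast_one]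
  have hkey : 1 + ((N:ℝ) - 1) * α^2 = κ := by
    have h4 : (N:ℝ) * (1 + ((N:ℝ)-1) * α^2) = κ * N := by
      rw [← htr2, htr1, Finset.sum_congr rfl fun i _ => hrow i, Finset.sum_const,
        Finset.card_univ, Fintype.card_fin, nsmul_eq_mul]
    have h5 : (N:ℝ) * (1 + ((N:ℝ)-1) * α^2) = (N:ℝ) * κ := by rw [h4]; ring
    exact mul_left_cancel₀ (ne_of_gt hNpos) h5
  have hκN : κ < N := div_lt_self hNpos (by exact_mod_cast hr)
  have hN1 : (1:ℝ) < N := by exact_mod_cast Nat.lt_of_lt_of_le (by norm_num) hN3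
  have hα2 : α^2 < 1 := by
    have h1 : ((N:ℝ)-1) * α^2 < ((N:ℝ)-1) * 1 := by nlinarith
    exact lt_of_mul_lt_mul_left h1 (by linarith)
  -- the matrix of squared inner products and its injectivity
  set M : Matrix (Fin N) (Fin N) ℝ := Matrix.of (fun i j => (X i j)^2) with hM
  have hMinj : ∀ c : Fin N → ℝ, M *ᵥ c = 0 → c = 0 := by
    intro c hc
    set s := ∑ i, c i with hs
    have hrowc : ∀ j, (1 - α^2) * c j + α^2 * s = 0 := by
      intro j
      have h6 := congrFun hc j
      simp only [Pi.zero_apply] at h6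
      rw [Matrix.mulVec, dotProduct, ← Finset.add_sum_erase _ _ (Finset.mem_univ j)] at h6
      have h7 : ∀ i ∈ Finset.univ.erase j, M j i * c i = α^2 * c i := fun i hi => by
        rw [hM, Matrix.of_apply, hXoff j i (Ne.symm (Finset.ne_of_mem_erase hi))]
      rw [Finset.sum_congr rfl h7] at h6
      have h8 : M j j = 1 := by rw [hM, Matrix.of_apply, hXdiag j, one_pow]
      rw [h8, one_mul] at h6
      have h9 : ∑ i ∈ Finset.univ.erase j, α^2 * c i = α^2 * (s - c j) := by
        rw [← Finset.mul_sum, Finset.sum_erase_eq_sub (Finset.mem_univ j), ← hs]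
      rw [h9] at h6
      have h10 : (0:ℝ) = 0 := rfl
      linarith [h6]
    have hssum : (1 - α^2) * s + (N:ℝ) * (α^2 * s) = 0 := by
      have h11 : ∑ j, ((1 - α^2) * c j + α^2 * s) = 0 := by
        rw [Finset.sum_congr rfl fun j _ => hrowc j, Finset.sum_const, Finset.card_univ,
          Fintype.card_fin, nsmul_eq_mul, mul_zero]
      rw [Finset.sum_add_distrib, ← Finset.mul_sum, ← hs, Finset.sum_const, Finset.card_univ,
        Fintype.card_fin, nsmul_eq_mul] at h11
      exact h11
    have hs0 : s = 0 := by
      have h12 : s * κ = 0 := by rw [← hkey]; ring_nf; ring_nf at hssum; linarith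
      exact (mul_eq_zero.mp h12).resolve_right (ne_of_gt hκpos)
    funext j
    have h13 := hrowc j
    rw [hs0, mul_zero, add_zero] at h13
    have h14 : (1:ℝ) - α^2 ≠ 0 := by nlinarith
    have := mul_eq_zero.mp h13
    simpa [h14] using this
  -- dimension count
  have hcard : Fintype.card (Sym2 (Fin r)) = N := by
    rw [Sym2.card, Fintype.card_fin, Nat.choose_two_right]
    have h : (r+1) * ((r+1) - 1) = 2 * N := by
      rw [Nat.add_sub_cancel, Nat.mul_comm, ← hNr]
    rw [h]
    omega
  set L : (Sym2 (Fin r) → ℝ) →ₗ[ℝ] (Fin N → ℝ) := (qMap v).comp (phiMap r) with hL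
  have hLB : ∀ c : Fin N → ℝ,
      L (fun p => Sym2.lift ⟨fun a b => ∑ i, c i * (v i a * v i b),
        fun a b => by simp only [mul_comm (v _ a) (v _ b)]⟩ p) = M *ᵥ c := by
    intro c
    funext j
    show ∑ a, ∑ b, v j a * (∑ i, c i * (v i a * v i b)) * v j b = _
    have e1 : ∑ a, ∑ b, v j a * (∑ i, c i * (v i a * v i b)) * v j b
        = ∑ a, ∑ b, ∑ i, c i * ((v i a * v j a) * (v i b * v j b)) := by
      refine Finset.sum_congr rfl fun a _ => Finset.sum_congr rfl fun b _ => ?_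
      rw [Finset.mul_sum, Finset.sum_mul]
      exact Finset.sum_congr rfl fun i _ => by ring
    have e2 : ∑ a, ∑ b, ∑ i, c i * ((v i a * v j a) * (v i b * v j b))
        = ∑ i, ∑ a, ∑ b, c i * ((v i a * v j a) * (v i b * v j b)) := by
      exact (Finset.sum_congr rfl fun a _ => Finset.sum_comm).trans Finset.sum_comm
    have e3 : ∀ i : Fin N, ∑ a, ∑ b, c i * ((v i a * v j a) * (v i b * v j b))
        = (X j i)^2 * c i := by
      intro i
      have : ∑ a, ∑ b, c i * ((v i a * v j a) * (v i b * v j b))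
          = c i * ((∑ a, v i a * v j a) * (∑ b, v i b * v j b)) := by
        rw [Finset.sum_mul_sum, Finset.mul_sum]
        refine Finset.sum_congr rfl fun a _ => ?_
        rw [Finset.mul_sum]
      rw [this, hX j i, hinner j i]
      have hc : ∑ a, v i a * v j a = ∑ a, v j a * v i a :=
        Finset.sum_congr rfl fun a _ => mul_comm _ _
      rw [hc]
      ring
    rw [e1, e2, Finset.sum_congr rfl fun i _ => e3 i]
    rw [Matrix.mulVec, dotProduct]
    rfl
  have hLsurj : Function.Surjective L := by
    have hinjM : Function.Injective M.mulVecLin := by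
      rw [← LinearMap.ker_eq_bot, LinearMap.ker_eq_bot']
      intro c hc
      exact hMinj c (by simpa using hc)
    have hsurjM := (LinearMap.injective_iff_surjective).mp hinjM
    intro c
    obtain ⟨c', hc'⟩ := hsurjM c
    exact ⟨_, by rw [hLB c']; simpa using hc'⟩
  have hLinj : Function.Injective L := by
    refine (LinearMap.injective_iff_surjective_of_finrank_eq_finrank ?_).mpr hLsurj
    rw [Module.finrank_pi, Module.finrank_pi, hcard, Fintype.card_fin]
  have hspan : ∀ S : Matrix (Fin r) (Fin r) ℝ, Sᵀ = S →
      (∀ i, ∑ a, ∑ b, v i a * S a b * v i b = 0) → S = 0 := by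
    intro S hSsym hS0
    set f : Sym2 (Fin r) → ℝ := fun p => Sym2.lift ⟨fun a b => S a b,
      fun a b => congrFun (congrFun hSsym b) a⟩ p with hf
    have hφf : phiMap r f = S := by
      ext a b
      show f s(a, b) = S a b
      rw [hf]
      simp
    have hf0 : f = 0 := by
      apply hLinj
      rw [map_zero]
      funext i
      show (qMap v) (phiMap r f) i = 0
      rw [hφf]
      exact hS0 i
    rw [← hφf, hf0, map_zero]
  -- extreme point
  have hextreme : X ∈ Set.extremePoints ℝ
      {Y : Matrix (Fin N) (Fin N) ℝ | Y.PosSemidef ∧ ∀ i, Y i i = 1} := by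
    rw [mem_extremePoints]
    refine ⟨⟨hXpsd, hXdiag⟩, fun Y hY Z hZ hseg => ?_⟩
    obtain ⟨a, b, ha, hb, hab, hsum⟩ := hseg
    set D : Matrix (Fin N) (Fin N) ℝ := Y - X with hD
    have hZD : Z = X - (a/b) • D := by
      have h1 : b • Z = b • (X - (a/b) • D) := by
        rw [smul_sub, smul_smul, mul_div_cancel₀ a (ne_of_gt hb), hD, smul_sub]
        rw [show b • X - (a • Y - a • X) = (a + b) • X - a • Y by rw [add_smul]; abel]
        rw [hab, one_smul, ← hsum]
        abel
      have := congrArg (fun W => b⁻¹ • W) h1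
      simpa [smul_smul, inv_mul_cancel₀ (ne_of_gt hb)] using this
    have hYherm : Yᵀ = Y := by
      ext i j
      have := congrFun (congrFun hY.1.1 i) j
      simpa using this
    have hker : ∀ u : Fin N → ℝ, X *ᵥ u = 0 → D *ᵥ u = 0 := by
      intro u hu
      have h0 : u ⬝ᵥ X *ᵥ u = 0 := by rw [hu, dotProduct_zero]
      have hYq : 0 ≤ u ⬝ᵥ Y *ᵥ u := by simpa using hY.1.dotProduct_mulVec_nonneg u
      have hZq : 0 ≤ u ⬝ᵥ Z *ᵥ u := by simpa using hZ.1.dotProduct_mulVec_nonneg u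
      have hsplit : a * (u ⬝ᵥ Y *ᵥ u) + b * (u ⬝ᵥ Z *ᵥ u) = 0 := by
        have h2 : u ⬝ᵥ (a • Y + b • Z) *ᵥ u = 0 := by rw [hsum]; exact h0
        rw [Matrix.add_mulVec, Matrix.smul_mulVec, Matrix.smul_mulVec,
          dotProduct_add, dotProduct_smul, dotProduct_smul,
          smul_eq_mul, smul_eq_mul] at h2
        exact h2
      have hYq0 : u ⬝ᵥ Y *ᵥ u = 0 := by
        have h4 : 0 ≤ a * (u ⬝ᵥ Y *ᵥ u) := mul_nonneg (le_of_lt ha) hYq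
        have h5 : 0 ≤ b * (u ⬝ᵥ Z *ᵥ u) := mul_nonneg (le_of_lt hb) hZq
        have h6 : a * (u ⬝ᵥ Y *ᵥ u) = 0 := by linarith
        exact (mul_eq_zero.mp h6).resolve_left (ne_of_gt ha)
      have hYu : Y *ᵥ u = 0 := (hY.1.dotProduct_mulVec_zero_iff u).mp (by simpa using hYq0)
      rw [hD, Matrix.sub_mulVec, hYu, hu, sub_zero]
    have hDsym : Dᵀ = D := by rw [hD, Matrix.transpose_sub, hXsym, hYherm]
    have hmulker : ∀ B : Matrix (Fin N) (Fin N) ℝ, X * B = 0 → D * B = 0 := by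
      intro B hB
      ext i j
      have hcol : X *ᵥ (fun k => B k j) = 0 := by
        funext i'
        have := congrFun (congrFun hB i') j
        simpa [Matrix.mul_apply, Matrix.mulVec, dotProduct] using this
      have := congrFun (hker _ hcol) i
      simpa [Matrix.mulVec, dotProduct, Matrix.mul_apply] using this
    have hXproj : X * (1 - κ⁻¹ • X) = 0 := by
      rw [Matrix.mul_sub, Matrix.mul_one, Matrix.mul_smul, hXX, smul_smul,
        inv_mul_cancel₀ (ne_of_gt hκpos), one_smul, sub_self]
    have hDXright : D = κ⁻¹ • (D * X) := by
      have h0 := hmulker _ hXproj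
      rw [Matrix.mul_sub, Matrix.mul_one, Matrix.mul_smul] at h0
      rw [← sub_eq_zero]
      exact h0
    have hDXleft : D = κ⁻¹ • (X * D) := by
      calc D = Dᵀ := hDsym.symm
        _ = (κ⁻¹ • (D * X))ᵀ := by rw [← hDXright]
        _ = κ⁻¹ • (X * D) := by
            rw [Matrix.transpose_smul, Matrix.transpose_mul, hXsym, hDsym]
    have hDfull : D = (κ⁻¹ * κ⁻¹) • (X * D * X) := by
      calc D = κ⁻¹ • (X * D) := hDXleft
        _ = κ⁻¹ • (X * (κ⁻¹ • (D * X))) := by rw [← hDXright]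
        _ = (κ⁻¹ * κ⁻¹) • (X * D * X) := by
            rw [Matrix.mul_smul, smul_smul, Matrix.mul_assoc]
    set S : Matrix (Fin r) (Fin r) ℝ := (κ⁻¹ * κ⁻¹) • (V * D * Vᵀ) with hS
    have hDS : D = Vᵀ * S * V := by
      have h1 : Vᵀ * S * V = (κ⁻¹ * κ⁻¹) • (Vᵀ * (V * D * Vᵀ) * V) := by
        rw [hS, Matrix.mul_smul, Matrix.smul_mul]
      have h2 : Vᵀ * (V * D * Vᵀ) * V = X * D * X := by
        rw [hXV]; simp only [Matrix.mul_assoc]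
      rw [h1, h2]; exact hDfull
    have hSsym : Sᵀ = S := by
      have h1 : (V * D * Vᵀ)ᵀ = V * D * Vᵀ := by
        rw [Matrix.transpose_mul, Matrix.transpose_mul, Matrix.transpose_transpose, hDsym,
          Matrix.mul_assoc]
      rw [hS, Matrix.transpose_smul, h1]
    have hSdiag : ∀ i, ∑ a, ∑ b, v i a * S a b * v i b = 0 := by
      intro i
      have hDii : D i i = 0 := by
        rw [hD, Matrix.sub_apply, hY.2 i, hXdiag i, sub_self]
      have h3 : (Vᵀ * S * V) i i = ∑ a, ∑ b, v i a * S a b * v i b := by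
        simp only [Matrix.mul_apply, Matrix.transpose_apply, hV, Matrix.of_apply]
        rw [Finset.sum_comm]
        refine Finset.sum_congr rfl fun b _ => ?_
        rw [Finset.sum_mul]
      rw [← h3, ← hDS, hDii]
    have hS0 : S = 0 := hspan S hSsym hSdiag
    have hD0 : D = 0 := by rw [hDS, hS0, Matrix.mul_zero, Matrix.zero_mul]
    have hYX : Y = X := by
      have := hD0
      rw [hD, sub_eq_zero] at this
      exact this
    have hZX : Z = X := by rw [hZD, hD0, smul_zero, sub_zero]
    exact ⟨hYX, hZX⟩
  exact ⟨hextreme, hXrank, hnotcut⟩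
end
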